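/- arXiv:2509.14541 — 10 statements merged into one kernel-verified Lean document; each statement's English description precedes it below -/
import Mathlib

section
/- Let d ≥ 1, τ ∈ (0,1) and λ ∈ (0,1]. Let L : ℝ^d × ℝ^d → ℝ be continuous, ℤ^d-periodic in its first variable and superlinear, and let f : ℝ^d → ℝ be continuous and ℤ^d-periodic. Let u be the unique ℤ^d-periodic continuous solution of the discrete discounted Lax–Oleinik equation with coupling f. Then for every x₀ ∈ ℝ^d there exists a sequence (x_{−k})_{k ≥ 0} in ℝ^d with x₀ = x₀ (the given point) such that for every k ≥ 0, u(x_{−k}) = (1−τλ) u(x_{−k−1}) + 𝓛_{τ,f}(x_{−k−1}, x_{−k}); that is, every point admits a discounted calibrated configuration. -/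
open MeasureTheory Set Filter

noncomputable section

/-- `ℝ^d` with the Euclidean norm. -/
abbrev Ed (d : ℕ) := EuclideanSpace ℝ (Fin d)

/-- The integer vector `k` viewed as an element of `ℝ^d`. -/
def intVec {d : ℕ} (k : Fin d → ℤ) : Ed d := WithLp.toLp 2 (fun i => (k i : ℝ))

/-- A function `h : ℝ^d → ℝ` is `ℤ^d`-periodic. -/
def ZPeriodic {d : ℕ} (h : Ed d → ℝ) : Prop :=
  ∀ (x : Ed d) (k : Fin d → ℤ), h (x + intVec k) = h x

/-- A Lagrangian `L : ℝ^d × ℝ^d → ℝ` is `ℤ^d`-periodic in its first variable. -/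
def ZPeriodic1 {d : ℕ} (L : Ed d → Ed d → ℝ) : Prop :=
  ∀ (x v : Ed d) (k : Fin d → ℤ), L (x + intVec k) v = L x v

/-- The discrete action `𝓛_{τ,f}(x,y) = τ (L(x,(y-x)/τ) + f(x))`. -/
def dAct {d : ℕ} (L : Ed d → Ed d → ℝ) (f : Ed d → ℝ) (τ : ℝ) (x y : Ed d) : ℝ :=
  τ * (L x (τ⁻¹ • (y - x)) + f x)

/-- `u` is a `ℤ^d`-periodic continuous solution of the discrete discounted
Lax–Oleinik equation `u(y) = inf_x ((1-τλ) u(x) + 𝓛_{τ,f}(x,y))`. -/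
def IsDLOSol {d : ℕ} (L : Ed d → Ed d → ℝ) (f : Ed d → ℝ) (τ lam : ℝ)
    (u : Ed d → ℝ) : Prop :=
  Continuous u ∧ ZPeriodic u ∧
    ∀ y : Ed d, IsGLB (Set.range fun x => (1 - τ * lam) * u x + dAct L f τ x y) (u y)

/-- `L` is superlinear in the velocity variable. -/
def Superlinear {d : ℕ} (L : Ed d → Ed d → ℝ) : Prop :=
  ∀ K : ℝ, 0 < K → ∃ C : ℝ, ∀ x v : Ed d, K * ‖v‖ + C ≤ L x v

lemma bddBelow_of_per {d : ℕ} {h : Ed d → ℝ} (hc : Continuous h) (hp : ZPeriodic h) :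
    ∃ m, ∀ x, m ≤ h x := by
  obtain ⟨z, hz, hmin⟩ := (isCompact_closedBall (0 : Ed d) (Real.sqrt d)).exists_isMinOn
    ⟨0, Metric.mem_closedBall_self (Real.sqrt_nonneg d)⟩ hc.continuousOn
  refine ⟨h z, fun x => ?_⟩
  set k : Fin d → ℤ := fun i => ⌊x i⌋ with hk
  have hx : h x = h (x - intVec k) := by
    conv_lhs => rw [show x = (x - intVec k) + intVec k by abel]
    exact hp _ k
  rw [hx]
  apply hmin
  rw [Metric.mem_closedBall, dist_zero_right]
  have hnorm : ‖x - intVec k‖ = Real.sqrt (∑ i, ‖(x - intVec k) i‖ ^ 2) :=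
    EuclideanSpace.norm_eq _
  rw [hnorm]
  apply Real.sqrt_le_sqrt
  calc ∑ i, ‖(x - intVec k) i‖ ^ 2 ≤ ∑ _i : Fin d, (1:ℝ) := by
        apply Finset.sum_le_sum
        intro i _
        have : (x - intVec k) i = Int.fract (x i) := by simp [intVec, hk]
        rw [this, Real.norm_eq_abs, abs_of_nonneg (Int.fract_nonneg _)]
        nlinarith [Int.fract_nonneg (x i), Int.fract_lt_one (x i)]
    _ = d := by simp


lemma attain {d : ℕ} {τ lam : ℝ} (hτ : τ ∈ Set.Ioo (0:ℝ) 1) (hlam : lam ∈ Set.Ioc (0:ℝ) 1)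
    {L : Ed d → Ed d → ℝ} (hLc : Continuous fun p : Ed d × Ed d => L p.1 p.2)
    (hLsl : Superlinear L)
    {f : Ed d → ℝ} (hfc : Continuous f) (hfper : ZPeriodic f)
    {u : Ed d → ℝ} (huc : Continuous u) (huper : ZPeriodic u)
    (hglb : ∀ y : Ed d, IsGLB (Set.range fun x => (1 - τ * lam) * u x + dAct L f τ x y) (u y))
    (y : Ed d) : ∃ x, u y = (1 - τ * lam) * u x + dAct L f τ x y := by
  obtain ⟨mu, hmu⟩ := bddBelow_of_per huc huper
  obtain ⟨mf, hmf⟩ := bddBelow_of_per hfc hfper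
  obtain ⟨C, hC⟩ := hLsl 1 one_pos
  have hτ0 : (0:ℝ) < τ := hτ.1
  have hd : (0:ℝ) ≤ 1 - τ * lam := by nlinarith [hτ.2, hlam.1, hlam.2]
  set g : Ed d → ℝ := fun x => (1 - τ * lam) * u x + dAct L f τ x y with hg
  have hgc : Continuous g := by
    apply Continuous.add
    · exact continuous_const.mul huc
    · unfold dAct
      apply continuous_const.mul
      apply Continuous.add _ hfc
      exact hLc.comp (continuous_id.prodMk ((continuous_const.sub continuous_id).const_smul τ⁻¹))
  set A : ℝ := (1 - τ * lam) * mu + τ * (C + mf) with hA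
  have hlow : ∀ x, ‖y - x‖ + A ≤ g x := by
    intro x
    have h1 : 1 * ‖τ⁻¹ • (y - x)‖ + C ≤ L x (τ⁻¹ • (y - x)) := hC x _
    have h2 : ‖τ⁻¹ • (y - x)‖ = τ⁻¹ * ‖y - x‖ := by
      rw [norm_smul, Real.norm_eq_abs, abs_of_pos (inv_pos.mpr hτ0)]
    have h3 : τ * (τ⁻¹ * ‖y - x‖) = ‖y - x‖ := by
      field_simp
    have h4 : (1 - τ * lam) * mu ≤ (1 - τ * lam) * u x := by
      exact mul_le_mul_of_nonneg_left (hmu x) hd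
    have h5 : τ * (‖τ⁻¹ • (y - x)‖ + C + mf) ≤ dAct L f τ x y := by
      unfold dAct
      apply mul_le_mul_of_nonneg_left _ hτ0.le
      have := hmf x
      linarith
    rw [h2] at h5
    simp only [hg, hA]
    nlinarith
  set R : ℝ := max 0 (g y - A) with hR
  obtain ⟨z, hz, hmin⟩ := (isCompact_closedBall y R).exists_isMinOn
    ⟨y, Metric.mem_closedBall_self (le_max_left _ _)⟩ hgc.continuousOn
  have hlb : ∀ x, g z ≤ g x := by
    intro x
    by_cases hx : x ∈ Metric.closedBall y R
    · exact hmin hx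
    · have h6 : R < dist x y := by
        rw [Metric.mem_closedBall] at hx; linarith [not_le.mp hx]
      have h7 : ‖y - x‖ = dist x y := by rw [dist_eq_norm, norm_sub_rev]
      have h8 : g y ≤ g x := by
        have := hlow x
        rw [h7] at this
        have : g y - A ≤ R := le_max_right _ _
        linarith [hlow x, h7 ▸ hlow x, le_max_right 0 (g y - A)]
      calc g z ≤ g y := hmin (Metric.mem_closedBall_self (le_max_left _ _))
        _ ≤ g x := h8
  have h9 := hglb y
  have h10 : u y ≤ g z := h9.1 ⟨z, rfl⟩
  have h11 : g z ≤ u y := h9.2 (fun w hw => by obtain ⟨x, rfl⟩ := hw; exact hlb x)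
  exact ⟨z, le_antisymm h10 h11⟩


/-- Every point admits a discounted calibrated configuration for the solution of
the discrete discounted Lax–Oleinik equation. -/
theorem stmt2 (d : ℕ) (hd : 1 ≤ d) (τ lam : ℝ)
    (hτ : τ ∈ Set.Ioo (0:ℝ) 1) (hlam : lam ∈ Set.Ioc (0:ℝ) 1)
    (L : Ed d → Ed d → ℝ) (hLc : Continuous fun p : Ed d × Ed d => L p.1 p.2)
    (hLper : ZPeriodic1 L) (hLsl : Superlinear L)
    (f : Ed d → ℝ) (hfc : Continuous f) (hfper : ZPeriodic f)
    (u : Ed d → ℝ) (hu : IsDLOSol L f τ lam u) :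
    ∀ x₀ : Ed d, ∃ xs : ℕ → Ed d, xs 0 = x₀ ∧
      ∀ k : ℕ, u (xs k) = (1 - τ * lam) * u (xs (k + 1)) + dAct L f τ (xs (k + 1)) (xs k) := by
  intro x₀
  obtain ⟨huc, huper, hglb⟩ := hu
  have hatt := attain hτ hlam hLc hLsl hfc hfper huc huper hglb
  let F : Ed d → Ed d := fun y => Classical.choose (hatt y)
  refine ⟨fun k => F^[k] x₀, rfl, fun k => ?_⟩
  have h1 : F^[k + 1] x₀ = F (F^[k] x₀) := Function.iterate_succ_apply' F k x₀
  simp only [h1]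
  exact Classical.choose_spec (hatt (F^[k] x₀))
end
end

section
/- Let d ≥ 1, let L : ℝ^d × ℝ^d → ℝ be C², ℤ^d-periodic in its first variable and superlinear, and let F∞ > 0. Then there exists a constant C > 0, depending only on L and F∞, such that for every τ ∈ (0,1), every λ ∈ (0,1] and every continuous ℤ^d-periodic f : ℝ^d → ℝ with ‖f‖∞ ≤ F∞, the unique ℤ^d-periodic continuous solution u of the discrete discounted Lax–Oleinik equation with coupling f is Lipschitz with Lipschitz constant at most C. -/
open MeasureTheory Set Filter

noncomputable section

/-- Reduction to the fundamental cube. -/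
lemma cube_red {d : ℕ} (x : Ed d) :
    ∃ (x' : Ed d) (k : Fin d → ℤ), x = x' + intVec k ∧ ‖x'‖ ≤ Real.sqrt d := by
  refine ⟨WithLp.toLp 2 (fun i => Int.fract (x i) : Fin d → ℝ), fun i => ⌊x i⌋, ?_, ?_⟩
  · ext i
    show x i = Int.fract (x i) + (⌊x i⌋ : ℝ)
    rw [Int.fract]; ring
  · rw [EuclideanSpace.norm_eq]
    apply Real.sqrt_le_sqrt
    calc ∑ i, ‖Int.fract (x i)‖ ^ 2 ≤ ∑ _i : Fin d, (1:ℝ) := by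
          apply Finset.sum_le_sum
          intro i _
          have h1 : |Int.fract (x i)| ≤ 1 := by
            rw [abs_of_nonneg (Int.fract_nonneg _)]
            exact (Int.fract_lt_one _).le
          calc ‖Int.fract (x i)‖ ^ 2 ≤ 1 ^ 2 :=
                pow_le_pow_left₀ (norm_nonneg _) (by simpa [Real.norm_eq_abs] using h1) 2
            _ = 1 := one_pow 2
      _ = (d : ℝ) := by simp

set_option maxHeartbeats 2000000 in
/-- The solutions of the discrete discounted Lax–Oleinik equations are
equi-Lipschitz, with a Lipschitz constant depending only on `L` and `F∞`. -/
theorem stmt3 (d : ℕ) (hd : 1 ≤ d)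
    (L : Ed d → Ed d → ℝ) (hL2 : ContDiff ℝ 2 fun p : Ed d × Ed d => L p.1 p.2)
    (hLper : ZPeriodic1 L) (hLsl : Superlinear L)
    (Finf : ℝ) (hFinf : 0 < Finf) :
    ∃ C : ℝ, 0 < C ∧
      ∀ τ lam : ℝ, τ ∈ Set.Ioo (0:ℝ) 1 → lam ∈ Set.Ioc (0:ℝ) 1 →
        ∀ f : Ed d → ℝ, Continuous f → ZPeriodic f → (∀ x, |f x| ≤ Finf) →
          ∀ u : Ed d → ℝ, IsDLOSol L f τ lam u →
            ∀ x y : Ed d, |u x - u y| ≤ C * ‖x - y‖ := by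
  classical
  set g : Ed d × Ed d → ℝ := fun p => L p.1 p.2 with hg
  set S : ℝ := Real.sqrt d with hSdef
  clear_value S
  have hd0 : (0:ℝ) < d := by exact_mod_cast Nat.lt_of_lt_of_le Nat.zero_lt_one hd
  have hS0 : 0 < S := by rw [hSdef]; exact Real.sqrt_pos.2 hd0
  obtain ⟨C₁, hC₁⟩ := hLsl 1 one_pos
  have hLlow : ∀ x v : Ed d, C₁ ≤ L x v := by
    intro x v
    have h1 := hC₁ x v
    have h2 := norm_nonneg v
    linarith
  obtain ⟨A, hA⟩ := (isCompact_closedBall (0 : Ed d × Ed d) S).exists_bound_of_continuousOn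
      hL2.continuous.continuousOn
  have hA2 : ∀ x v : Ed d, ‖v‖ ≤ S → L x v ≤ A := by
    intro x v hv
    obtain ⟨x', k, hxk, hx'⟩ := cube_red x
    have hmem : (x', v) ∈ Metric.closedBall (0 : Ed d × Ed d) S := by
      rw [mem_closedBall_zero_iff, Prod.norm_def]
      exact max_le (by rw [hSdef]; exact hx') hv
    have h1 := hA (x', v) hmem
    have h2 : L x v = L x' v := by rw [hxk, hLper]
    rw [h2]
    calc L x' v ≤ |L x' v| := le_abs_self _
      _ ≤ A := h1
  have hC₁A : C₁ ≤ A := le_trans (hLlow 0 0) (hA2 0 0 (by simp [hS0.le]))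
  set D : ℝ := A + 2 * Finf - C₁ with hDdef
  clear_value D
  have hD0 : 0 < D := by rw [hDdef]; linarith
  set K₀ : ℝ := D / S + 1 with hK₀def
  clear_value K₀
  have hK₀ : 0 < K₀ := by rw [hK₀def]; have := div_pos hD0 hS0; linarith
  obtain ⟨C₂, hC₂⟩ := hLsl K₀ hK₀
  have hC₂A : C₂ ≤ A := by
    have h1 := hC₂ 0 0
    have h2 := hA2 0 0 (by simp [hS0.le])
    simp only [norm_zero, mul_zero, zero_add] at h1
    linarith
  set R : ℝ := D + A + 2 * Finf - C₂ + 1 with hRdef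
  clear_value R
  have hR1 : 1 ≤ R := by rw [hRdef]; linarith
  set ρ : ℝ := S + R + 1 with hρdef
  clear_value ρ
  have hρ0 : 0 < ρ := by linarith
  have hgdiff : Differentiable ℝ g := hL2.differentiable (by norm_num)
  obtain ⟨G, hGbd⟩ := (isCompact_closedBall (0 : Ed d × Ed d) ρ).exists_bound_of_continuousOn
      (hL2.continuous_fderiv (by norm_num)).continuousOn
  have hG0 : 0 ≤ G :=
    le_trans (norm_nonneg _) (hGbd 0 (Metric.mem_closedBall_self hρ0.le))
  have hGlip : ∀ p q : Ed d × Ed d, p ∈ Metric.closedBall (0 : Ed d × Ed d) ρ →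
      q ∈ Metric.closedBall (0 : Ed d × Ed d) ρ → ‖g q - g p‖ ≤ G * ‖q - p‖ := by
    intro p q hp hq
    exact Convex.norm_image_sub_le_of_norm_fderiv_le (fun z _ => hgdiff z)
      (fun z hz => hGbd z hz) (convex_closedBall _ _) hp hq
  refine ⟨G + 1, by linarith, ?_⟩
  rintro τ lam ⟨hτ0, hτ1⟩ ⟨hlam0, hlam1⟩ f hfc hfper hfb u ⟨huc, huper, huglb⟩
  have hτlam : τ * lam ≤ 1 := by
    calc τ * lam ≤ 1 * 1 := mul_le_mul hτ1.le hlam1 hlam0.le zero_le_one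
      _ = 1 := mul_one 1
  have hτlam0 : 0 < τ * lam := mul_pos hτ0 hlam0
  set a : ℝ := 1 - τ * lam with hadef
  clear_value a
  have ha0 : 0 ≤ a := by rw [hadef]; linarith
  have ha1 : a ≤ 1 := by rw [hadef]; linarith
  -- upper bound from the GLB
  have ub : ∀ x y : Ed d, u y ≤ a * u x + τ * (L x (τ⁻¹ • (y - x)) + f x) :=
    fun x y => (huglb y).1 ⟨x, rfl⟩
  -- min and max of u are attained
  have hper' : ∀ z : Ed d, ∃ z' ∈ Metric.closedBall (0 : Ed d) S, u z = u z' := by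
    intro z
    obtain ⟨z', k, hzk, hz'⟩ := cube_red z
    exact ⟨z', mem_closedBall_zero_iff.2 (by rw [hSdef]; exact hz'), by rw [hzk, huper]⟩
  obtain ⟨x₀, hx₀mem, hx₀⟩ := (isCompact_closedBall (0 : Ed d) S).exists_isMinOn
      ⟨0, Metric.mem_closedBall_self hS0.le⟩ huc.continuousOn
  have hmin : ∀ z, u x₀ ≤ u z := by
    intro z
    obtain ⟨z', hz'mem, hz'⟩ := hper' z
    rw [hz']
    exact hx₀ hz'mem
  obtain ⟨x₁, hx₁mem, hx₁⟩ := (isCompact_closedBall (0 : Ed d) S).exists_isMaxOn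
      ⟨0, Metric.mem_closedBall_self hS0.le⟩ huc.continuousOn
  have hmax : ∀ z, u z ≤ u x₁ := by
    intro z
    obtain ⟨z', hz'mem, hz'⟩ := hper' z
    rw [hz']
    exact hx₁ hz'mem
  -- lower bound on lam * min u
  have hmlb : C₁ - Finf ≤ lam * u x₀ := by
    have hlbd : (a * u x₀ + τ * (C₁ - Finf)) ∈
        lowerBounds (Set.range fun x => a * u x + dAct L f τ x x₀) := by
      rintro w ⟨x, rfl⟩
      show a * u x₀ + τ * (C₁ - Finf) ≤ a * u x + dAct L f τ x x₀
      have hdl : τ * (C₁ - Finf) ≤ dAct L f τ x x₀ := by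
        simp only [dAct]
        exact mul_le_mul_of_nonneg_left
          (by linarith [hLlow x (τ⁻¹ • (x₀ - x)), neg_le_of_abs_le (hfb x)]) hτ0.le
      linarith [mul_le_mul_of_nonneg_left (hmin x) ha0]
    have hglb := (huglb x₀).2 hlbd
    have hexp : u x₀ - a * u x₀ = τ * (lam * u x₀) := by rw [hadef]; ring
    have h5 : τ * (C₁ - Finf) ≤ τ * (lam * u x₀) := by linarith
    exact le_of_mul_le_mul_left h5 hτ0
  -- upper bound on lam * max u
  have hmub : lam * u x₁ ≤ A + Finf := by
    have h0 : (τ⁻¹ • (x₁ - x₁) : Ed d) = 0 := by simp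
    have h1 := ub x₁ x₁
    rw [h0] at h1
    have h2 : L x₁ 0 ≤ A := hA2 _ _ (by simp [hS0.le])
    have h3 : f x₁ ≤ Finf := le_of_abs_le (hfb x₁)
    have h4 : τ * (L x₁ 0 + f x₁) ≤ τ * (A + Finf) :=
      mul_le_mul_of_nonneg_left (by linarith) hτ0.le
    have hexp : u x₁ - a * u x₁ = τ * (lam * u x₁) := by rw [hadef]; ring
    have h5 : τ * (lam * u x₁) ≤ τ * (A + Finf) := by linarith
    exact le_of_mul_le_mul_left h5 hτ0
  set Q : ℝ := (A + Finf) / lam with hQdef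
  clear_value Q
  have hQeq : lam * Q = A + Finf := by
    rw [hQdef]; field_simp
  have hQub : ∀ z, u z ≤ Q := by
    intro z
    rw [hQdef, le_div_iff₀ hlam0]
    calc u z * lam = lam * u z := mul_comm _ _
      _ ≤ lam * u x₁ := mul_le_mul_of_nonneg_left (hmax z) hlam0.le
      _ ≤ A + Finf := hmub
  have hQlb : ∀ z, Q - u z ≤ D / lam := by
    intro z
    have h1 : (C₁ - Finf) / lam ≤ u z := by
      rw [div_le_iff₀ hlam0]
      calc C₁ - Finf ≤ lam * u x₀ := hmlb
        _ ≤ lam * u z := mul_le_mul_of_nonneg_left (hmin z) hlam0.le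
        _ = u z * lam := mul_comm _ _
    have h2 : Q - (C₁ - Finf) / lam = D / lam := by
      rw [hQdef, hDdef, div_sub_div_same]
      congr 1
      ring
    linarith
  -- one-step estimate
  have step : ∀ p q : Ed d, ‖q - p‖ ≤ τ * S → u q - Q ≤ a * (u p - Q) := by
    intro p q hpq
    have hvel : ‖(τ⁻¹ • (q - p) : Ed d)‖ ≤ S := by
      rw [norm_smul, norm_inv, Real.norm_eq_abs, abs_of_pos hτ0]
      calc τ⁻¹ * ‖q - p‖ ≤ τ⁻¹ * (τ * S) :=
            mul_le_mul_of_nonneg_left hpq (inv_nonneg.2 hτ0.le)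
        _ = S := by rw [inv_mul_cancel_left₀ hτ0.ne']
    have h1 := ub p q
    have h2 : L p (τ⁻¹ • (q - p)) ≤ A := hA2 _ _ hvel
    have h3 : f p ≤ Finf := le_of_abs_le (hfb p)
    have h4 : τ * (L p (τ⁻¹ • (q - p)) + f p) ≤ τ * (A + Finf) :=
      mul_le_mul_of_nonneg_left (by linarith) hτ0.le
    have hexp : a * (u p - Q) = a * u p - Q + τ * (lam * Q) := by
      rw [hadef]; ring
    rw [hexp, hQeq]
    linarith
  -- chain estimate
  have chain : ∀ n : ℕ, ∀ p q : Ed d, ‖q - p‖ ≤ n * (τ * S) →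
      u q - Q ≤ a ^ n * (u p - Q) := by
    intro n
    induction n with
    | zero =>
      intro p q h
      have hqp : q = p := by
        rw [← sub_eq_zero]
        exact norm_le_zero_iff.1 (by simpa using h)
      simp [hqp]
    | succ n ih =>
      intro p q h
      have hn1 : (0:ℝ) < (n:ℝ) + 1 := by positivity
      set z : Ed d := p + ((n:ℝ)+1)⁻¹ • (q - p) with hzdef
      have hzp : z - p = ((n:ℝ)+1)⁻¹ • (q - p) := by
        rw [hzdef, add_sub_cancel_left]
      have hqz : q - z = (1 - ((n:ℝ)+1)⁻¹) • (q - p) := by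
        rw [hzdef, sub_smul, one_smul, sub_add_eq_sub_sub]
      clear_value z
      have hcast : ((n + 1 : ℕ) : ℝ) = (n:ℝ) + 1 := by push_cast; ring
      rw [hcast] at h
      have h1 : ‖z - p‖ ≤ τ * S := by
        rw [hzp, norm_smul, norm_inv, Real.norm_eq_abs, abs_of_pos hn1]
        calc ((n:ℝ)+1)⁻¹ * ‖q - p‖ ≤ ((n:ℝ)+1)⁻¹ * (((n:ℝ)+1) * (τ * S)) :=
              mul_le_mul_of_nonneg_left h (by positivity)
          _ = τ * S := by rw [inv_mul_cancel_left₀ hn1.ne']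
      have h2 : ‖q - z‖ ≤ n * (τ * S) := by
        have hc : (0:ℝ) ≤ 1 - ((n:ℝ)+1)⁻¹ := by
          rw [sub_nonneg]
          exact inv_le_one_of_one_le₀ (by linarith)
        rw [hqz, norm_smul, Real.norm_eq_abs, abs_of_nonneg hc]
        calc (1 - ((n:ℝ)+1)⁻¹) * ‖q - p‖ ≤ (1 - ((n:ℝ)+1)⁻¹) * (((n:ℝ)+1) * (τ * S)) :=
              mul_le_mul_of_nonneg_left h hc
          _ = n * (τ * S) := by
            have e : (1 - ((n:ℝ)+1)⁻¹) * (((n:ℝ)+1) * (τ * S))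
                = ((n:ℝ)+1) * (τ * S) - ((n:ℝ)+1)⁻¹ * (((n:ℝ)+1) * (τ * S)) := by ring
            rw [e, inv_mul_cancel_left₀ hn1.ne']
            ring
      have hs := step p z h1
      have hi := ih z q h2
      calc u q - Q ≤ a ^ n * (u z - Q) := hi
        _ ≤ a ^ n * (a * (u p - Q)) :=
            mul_le_mul_of_nonneg_left hs (pow_nonneg ha0 n)
        _ = a ^ (n+1) * (u p - Q) := by rw [pow_succ]; ring
  -- oscillation estimate
  have osc : ∀ p q : Ed d, u q - u p ≤ D / S * ‖q - p‖ + τ * D := by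
    intro p q
    have hτS : 0 < τ * S := mul_pos hτ0 hS0
    set n : ℕ := ⌊‖q - p‖ / (τ * S)⌋₊ + 1 with hndef
    clear_value n
    have hn : ‖q - p‖ ≤ n * (τ * S) := by
      have h1 : ‖q - p‖ / (τ * S) < n := by
        rw [hndef]; push_cast
        exact Nat.lt_floor_add_one _
      calc ‖q - p‖ = ‖q - p‖ / (τ * S) * (τ * S) := by
            rw [div_mul_cancel₀ _ hτS.ne']
        _ ≤ n * (τ * S) := mul_le_mul_of_nonneg_right h1.le hτS.le
    have hnbd : (n:ℝ) ≤ ‖q - p‖ / (τ * S) + 1 := by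
      rw [hndef]; push_cast
      have := Nat.floor_le (a := ‖q - p‖ / (τ * S)) (div_nonneg (norm_nonneg _) hτS.le)
      linarith
    have hch := chain n p q hn
    have hbern : 1 - (n:ℝ) * (τ * lam) ≤ a ^ n := by
      have h := one_add_mul_le_pow (a := -(τ * lam)) (by linarith) n
      have he : (1 + -(τ * lam)) = a := by rw [hadef]; ring
      rw [he] at h
      linarith
    have hpow0 : 0 ≤ a ^ n := pow_nonneg ha0 n
    have hpow1 : a ^ n ≤ 1 := pow_le_one₀ ha0 ha1
    have hQp0 : 0 ≤ Q - u p := sub_nonneg.2 (hQub p)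
    have hkey : u q - u p ≤ (1 - a ^ n) * (Q - u p) := by
      have e : (1 - a ^ n) * (Q - u p) = (Q - u p) + a ^ n * (u p - Q) := by ring
      linarith
    have h2 : (1 - a ^ n) * (Q - u p) ≤ ((n:ℝ) * (τ * lam)) * (D / lam) :=
      mul_le_mul (by linarith) (hQlb p) hQp0
        (mul_nonneg (Nat.cast_nonneg _) hτlam0.le)
    have h3 : ((n:ℝ) * (τ * lam)) * (D / lam) = (n:ℝ) * (τ * D) := by
      field_simp [hlam0.ne']
    have h4 : (n:ℝ) * (τ * D) ≤ (‖q - p‖ / (τ * S) + 1) * (τ * D) :=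
      mul_le_mul_of_nonneg_right hnbd (mul_nonneg hτ0.le hD0.le)
    have h5 : (‖q - p‖ / (τ * S) + 1) * (τ * D) = D / S * ‖q - p‖ + τ * D := by
      field_simp [hτ0.ne', hS0.ne']
    linarith
  -- local Lipschitz estimate
  have loc : ∀ y y' : Ed d, ‖y' - y‖ ≤ τ → u y' - u y ≤ G * ‖y' - y‖ := by
    intro y y' hyy
    have main : ∀ ε : ℝ, 0 < ε → ε ≤ τ → u y' - u y ≤ G * ‖y' - y‖ + ε := by
      intro ε hε hετ
      obtain ⟨b, ⟨x, rfl⟩, _, hblt⟩ := (huglb y).exists_between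
        (lt_add_of_pos_right (u y) hε)
      simp only [dAct] at hblt
      set v : Ed d := τ⁻¹ • (y - x) with hvdef
      clear_value v
      have hxy : ‖y - x‖ = τ * ‖v‖ := by
        rw [hvdef, norm_smul, norm_inv, Real.norm_eq_abs, abs_of_pos hτ0,
          mul_inv_cancel_left₀ hτ0.ne']
      -- trivial competitor at y
      have htriv : u y ≤ a * u y + τ * (A + Finf) := by
        have h0 : (τ⁻¹ • (y - y) : Ed d) = 0 := by simp
        have h1 := ub y y
        rw [h0] at h1
        have h2 : L y 0 ≤ A := hA2 _ _ (by simp [hS0.le])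
        have h3 : f y ≤ Finf := le_of_abs_le (hfb y)
        have h4 : τ * (L y 0 + f y) ≤ τ * (A + Finf) :=
          mul_le_mul_of_nonneg_left (by linarith) hτ0.le
        linarith
      have hfx : -Finf ≤ f x := neg_le_of_abs_le (hfb x)
      have hτfx : τ * (-Finf) ≤ τ * f x := mul_le_mul_of_nonneg_left hfx hτ0.le
      have hLxv : τ * L x v ≤ a * (u y - u x) + τ * (A + 2 * Finf) + ε := by
        have e1 : τ * (L x v + f x) = τ * L x v + τ * f x := by ring
        have e2 : a * (u y - u x) = a * u y - a * u x := by ring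
        have e3 : τ * (A + 2 * Finf) = τ * (A + Finf) - τ * (-Finf) := by ring
        linarith
      have hoscb : a * (u y - u x) ≤ D / S * ‖y - x‖ + τ * D := by
        have h1 := osc x y
        have hrhs : 0 ≤ D / S * ‖y - x‖ + τ * D :=
          add_nonneg (mul_nonneg (div_pos hD0 hS0).le (norm_nonneg _))
            (mul_nonneg hτ0.le hD0.le)
        rcases le_or_gt (u y - u x) 0 with h | h
        · have := mul_nonpos_of_nonneg_of_nonpos ha0 h
          linarith
        · have h2 : a * (u y - u x) ≤ 1 * (u y - u x) :=
            mul_le_mul_of_nonneg_right ha1 h.le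
          linarith
      have hsl := hC₂ x v
      have hyx : ‖y - x‖ ≤ τ * R := by
        have h6 : τ * (K₀ * ‖v‖ + C₂) ≤ τ * L x v :=
          mul_le_mul_of_nonneg_left hsl hτ0.le
        have h7 : τ * (K₀ * ‖v‖ + C₂) = K₀ * ‖y - x‖ + τ * C₂ := by
          rw [hxy]; ring
        have hKN : K₀ * ‖y - x‖ = D / S * ‖y - x‖ + ‖y - x‖ := by
          rw [hK₀def]; ring
        have hτR : τ * R = τ * D + τ * (A + 2 * Finf) - τ * C₂ + τ := by
          rw [hRdef, hDdef]; ring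
        linarith
      have hvR : ‖v‖ ≤ R := by
        rw [hxy] at hyx
        exact le_of_mul_le_mul_left hyx hτ0
      set v' : Ed d := τ⁻¹ • (y' - x) with hv'def
      clear_value v'
      have hub' := ub x y'
      rw [← hv'def] at hub'
      have hvv' : v' - v = τ⁻¹ • (y' - y) := by
        rw [hv'def, hvdef, ← smul_sub, sub_sub_sub_cancel_right]
      have hvv'n : ‖v' - v‖ = τ⁻¹ * ‖y' - y‖ := by
        rw [hvv', norm_smul, norm_inv, Real.norm_eq_abs, abs_of_pos hτ0]
      have hv'R : ‖v'‖ ≤ R + 1 := by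
        have h1 : τ⁻¹ * ‖y' - y‖ ≤ τ⁻¹ * τ :=
          mul_le_mul_of_nonneg_left hyy (inv_nonneg.2 hτ0.le)
        have h2 : τ⁻¹ * τ = 1 := inv_mul_cancel₀ hτ0.ne'
        calc ‖v'‖ ≤ ‖v‖ + ‖v' - v‖ := norm_le_norm_add_norm_sub' v' v
          _ ≤ R + 1 := by rw [hvv'n]; linarith
      obtain ⟨x', k, hxk, hx'⟩ := cube_red x
      have e1 : L x v = L x' v := by rw [hxk, hLper]
      have e2 : L x v' = L x' v' := by rw [hxk, hLper]
      have hmem1 : (x', v) ∈ Metric.closedBall (0 : Ed d × Ed d) ρ := by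
        rw [mem_closedBall_zero_iff, Prod.norm_def]
        apply max_le
        · rw [hρdef]; linarith
        · rw [hρdef]; linarith
      have hmem2 : (x', v') ∈ Metric.closedBall (0 : Ed d × Ed d) ρ := by
        rw [mem_closedBall_zero_iff, Prod.norm_def]
        apply max_le
        · rw [hρdef]; linarith
        · rw [hρdef]; linarith
      have hLd : L x' v' - L x' v ≤ G * (τ⁻¹ * ‖y' - y‖) := by
        have h1 := hGlip (x', v) (x', v') hmem1 hmem2
        have h2 : ((x', v') - (x', v) : Ed d × Ed d) = (0, v' - v) := by
          simp [Prod.ext_iff]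
        have h3 : ‖((x', v') - (x', v) : Ed d × Ed d)‖ = ‖v' - v‖ := by
          rw [h2, Prod.norm_def]
          simp
        rw [h3, hvv'n] at h1
        calc L x' v' - L x' v ≤ ‖g (x', v') - g (x', v)‖ := le_abs_self _
          _ ≤ G * (τ⁻¹ * ‖y' - y‖) := h1
      have h9 : τ * (L x' v' - L x' v) ≤ G * ‖y' - y‖ := by
        have hτif : τ * (G * (τ⁻¹ * ‖y' - y‖)) = G * ‖y' - y‖ := by
          rw [show τ * (G * (τ⁻¹ * ‖y' - y‖)) = (τ * τ⁻¹) * (G * ‖y' - y‖) from by ring,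
            mul_inv_cancel₀ hτ0.ne', one_mul]
        rw [← hτif]
        exact mul_le_mul_of_nonneg_left hLd hτ0.le
      rw [e1] at hblt
      rw [e2] at hub'
      have e4 : τ * (L x' v' + f x) - τ * (L x' v + f x) = τ * (L x' v' - L x' v) := by
        ring
      linarith
    -- pass to the limit ε → 0
    by_contra hcon
    push_neg at hcon
    set ε := min ((u y' - u y - G * ‖y' - y‖) / 2) τ with hεdef
    have hε0 : 0 < ε := lt_min (by linarith) hτ0
    have hm := main ε hε0 (min_le_right _ _)
    have h1 : ε ≤ (u y' - u y - G * ‖y' - y‖) / 2 := min_le_left _ _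
    linarith
  -- global estimate by subdivision
  have glob : ∀ n : ℕ, ∀ p q : Ed d, ‖q - p‖ ≤ n * τ →
      u q - u p ≤ G * ‖q - p‖ := by
    intro n
    induction n with
    | zero =>
      intro p q h
      have hqp : q = p := by
        rw [← sub_eq_zero]
        exact norm_le_zero_iff.1 (by simpa using h)
      simp [hqp]
    | succ n ih =>
      intro p q h
      have hn1 : (0:ℝ) < (n:ℝ) + 1 := by positivity
      set z : Ed d := p + ((n:ℝ)+1)⁻¹ • (q - p) with hzdef
      have hzp : z - p = ((n:ℝ)+1)⁻¹ • (q - p) := by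
        rw [hzdef, add_sub_cancel_left]
      have hqz : q - z = (1 - ((n:ℝ)+1)⁻¹) • (q - p) := by
        rw [hzdef, sub_smul, one_smul, sub_add_eq_sub_sub]
      clear_value z
      have hcast : ((n + 1 : ℕ) : ℝ) = (n:ℝ) + 1 := by push_cast; ring
      rw [hcast] at h
      have hc : (0:ℝ) ≤ 1 - ((n:ℝ)+1)⁻¹ := by
        rw [sub_nonneg]
        exact inv_le_one_of_one_le₀ (by linarith)
      have hzpn : ‖z - p‖ = ((n:ℝ)+1)⁻¹ * ‖q - p‖ := by
        rw [hzp, norm_smul, norm_inv, Real.norm_eq_abs, abs_of_pos hn1]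
      have hqzn : ‖q - z‖ = (1 - ((n:ℝ)+1)⁻¹) * ‖q - p‖ := by
        rw [hqz, norm_smul, Real.norm_eq_abs, abs_of_nonneg hc]
      have h1 : ‖z - p‖ ≤ τ := by
        rw [hzpn]
        calc ((n:ℝ)+1)⁻¹ * ‖q - p‖ ≤ ((n:ℝ)+1)⁻¹ * (((n:ℝ)+1) * τ) :=
              mul_le_mul_of_nonneg_left h (by positivity)
          _ = τ := by rw [inv_mul_cancel_left₀ hn1.ne']
      have h2 : ‖q - z‖ ≤ n * τ := by
        rw [hqzn]
        calc (1 - ((n:ℝ)+1)⁻¹) * ‖q - p‖ ≤ (1 - ((n:ℝ)+1)⁻¹) * (((n:ℝ)+1) * τ) :=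
              mul_le_mul_of_nonneg_left h hc
          _ = n * τ := by
            have e : (1 - ((n:ℝ)+1)⁻¹) * (((n:ℝ)+1) * τ)
                = ((n:ℝ)+1) * τ - ((n:ℝ)+1)⁻¹ * (((n:ℝ)+1) * τ) := by ring
            rw [e, inv_mul_cancel_left₀ hn1.ne']
            ring
      have hl := loc p z h1
      have hi := ih z q h2
      have hsum : G * ‖z - p‖ + G * ‖q - z‖ = G * ‖q - p‖ := by
        rw [hzpn, hqzn]; ring
      linarith
  -- conclude
  intro x y
  obtain ⟨n, hn⟩ := exists_nat_ge (‖x - y‖ / τ)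
  have hxy : ‖x - y‖ ≤ n * τ := by
    calc ‖x - y‖ = ‖x - y‖ / τ * τ := by rw [div_mul_cancel₀ _ hτ0.ne']
      _ ≤ n * τ := mul_le_mul_of_nonneg_right hn hτ0.le
  have hyx : ‖y - x‖ ≤ n * τ := by rwa [norm_sub_rev]
  have h1 := glob n y x hxy
  have h2 := glob n x y hyx
  rw [norm_sub_rev y x] at h2
  have hnn : 0 ≤ ‖x - y‖ := norm_nonneg _
  have e : (G + 1) * ‖x - y‖ = G * ‖x - y‖ + ‖x - y‖ := by ring
  rw [abs_sub_le_iff]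
  constructor <;> linarith
end
end

section
/- Let d ≥ 1, let L : ℝ^d × ℝ^d → ℝ be continuous, ℤ^d-periodic in its first variable and superlinear, and let F∞ > 0. For every κ > 0 and Ĉ > 0 there exist constants D > 0 and C̃ > 0, depending only on κ, Ĉ, L and F∞, such that for all τ ∈ (0,1), λ ∈ (0,1], every continuous ℤ^d-periodic f with ‖f‖∞ ≤ F∞, and every ℤ^d-periodic Lipschitz φ : ℝ^d → ℝ with Lipschitz constant at most κ and ‖φ‖∞ ≤ Ĉ/λ, the following hold: (a) for every y ∈ ℝ^d, every minimizer x of x ↦ (1−τλ) φ(x) + 𝓛_{τ,f}(x,y) satisfies |x − y| ≤ τD; (b) sup_y | inf_{x ∈ ℝ^d}( (1−τλ) φ(x) + 𝓛_{τ,f}(x,y) ) − φ(y) | ≤ τ C̃. -/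
open MeasureTheory Set Filter

noncomputable section

lemma periodic_bddAbove {d : ℕ} (g : Ed d → ℝ) (hg : Continuous g)
    (hper : ZPeriodic g) : ∃ M : ℝ, ∀ x, g x ≤ M := by
  obtain ⟨M, hM⟩ := (((isCompact_closedBall (0 : Ed d) d).image hg)).bddAbove
  refine ⟨M, fun x => ?_⟩
  set k : Fin d → ℤ := fun i => ⌊x i⌋ with hk
  set z : Ed d := x - intVec k with hz
  have hxz : g x = g z := by
    rw [← hper z k]
    congr 1
    simp [hz]
  rw [hxz]
  apply hM
  refine ⟨z, ?_, rfl⟩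
  simp only [Metric.mem_closedBall, dist_zero_right]
  have h1 : ∀ i, ‖z i‖ ≤ 1 := by
    intro i
    have : z i = Int.fract (x i) := by
      rw [hz]
      simp [intVec, hk, Int.self_sub_floor]
    rw [this, Real.norm_eq_abs, abs_of_nonneg (Int.fract_nonneg _)]
    exact (Int.fract_lt_one _).le
  have hzn : ‖z‖ ≤ Real.sqrt d := by
    rw [EuclideanSpace.norm_eq]
    apply Real.sqrt_le_sqrt
    calc ∑ i, ‖z i‖^2 ≤ ∑ _i : Fin d, 1 := by
          refine Finset.sum_le_sum fun i _ => ?_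
          nlinarith [h1 i, norm_nonneg (z i)]
      _ = d := by simp
  have : Real.sqrt d ≤ d := by
    have h2 : Real.sqrt d ≤ Real.sqrt ((d:ℝ)^2) := by
      apply Real.sqrt_le_sqrt
      have : d ≤ d^2 := Nat.le_self_pow two_ne_zero d
      exact_mod_cast this
    rwa [Real.sqrt_sq (by positivity)] at h2
  linarith

/-- Minimizers in the discrete discounted Lax–Oleinik operator applied to an
equi-Lipschitz, `O(1/λ)`-bounded periodic function stay `τD`-close, and the
operator moves such a function by at most `τ C̃`. -/
theorem stmt4 (d : ℕ) (hd : 1 ≤ d)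
    (L : Ed d → Ed d → ℝ) (hLc : Continuous fun p : Ed d × Ed d => L p.1 p.2)
    (hLper : ZPeriodic1 L) (hLsl : Superlinear L)
    (Finf : ℝ) (hFinf : 0 < Finf) :
    ∀ κ : ℝ, 0 < κ → ∀ Chat : ℝ, 0 < Chat →
      ∃ D : ℝ, 0 < D ∧ ∃ Ct : ℝ, 0 < Ct ∧
        ∀ τ lam : ℝ, τ ∈ Set.Ioo (0:ℝ) 1 → lam ∈ Set.Ioc (0:ℝ) 1 →
          ∀ f : Ed d → ℝ, Continuous f → ZPeriodic f → (∀ x, |f x| ≤ Finf) →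
            ∀ φ : Ed d → ℝ, ZPeriodic φ →
              (∀ x y : Ed d, |φ x - φ y| ≤ κ * ‖x - y‖) →
              (∀ x : Ed d, |φ x| ≤ Chat / lam) →
              (∀ y x : Ed d,
                  (∀ z : Ed d, (1 - τ * lam) * φ x + dAct L f τ x y ≤
                    (1 - τ * lam) * φ z + dAct L f τ z y) →
                  ‖x - y‖ ≤ τ * D) ∧
              (∀ y : Ed d,
                  |(⨅ x : Ed d, ((1 - τ * lam) * φ x + dAct L f τ x y)) - φ y| ≤ τ * Ct) := by
  intro κ hκ Chat hChat
  obtain ⟨C, hC⟩ := hLsl (κ + 1) (by linarith)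
  obtain ⟨M0, hM0⟩ := periodic_bddAbove (fun x => L x 0)
    (hLc.comp (continuous_id.prodMk continuous_const)) (fun x k => hLper x 0 k)
  refine ⟨|M0| + |C| + 2*Finf + 1, by positivity,
    Chat + |M0| + |C| + Finf + 1, by positivity, ?_⟩
  rintro τ lam ⟨hτ0, hτ1⟩ ⟨hlam0, hlam1⟩ f hfc hfper hfb φ hφper hφLip hφb
  have hτlam1 : τ * lam < 1 := by nlinarith
  have hτlam0 : 0 < τ * lam := mul_pos hτ0 hlam0
  have ha0 : (0:ℝ) ≤ 1 - τ * lam := by linarith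
  have ha1 : 1 - τ * lam ≤ 1 := by linarith
  -- λ |φ x| ≤ Chat
  have hφb' : ∀ x, lam * |φ x| ≤ Chat := by
    intro x
    have := mul_le_mul_of_nonneg_left (hφb x) hlam0.le
    rwa [mul_div_cancel₀ _ (ne_of_gt hlam0)] at this
  -- key norm computation
  have hv : ∀ x y : Ed d, τ * ‖τ⁻¹ • (y - x)‖ = ‖y - x‖ := by
    intro x y
    rw [norm_smul, Real.norm_eq_abs, abs_of_pos (inv_pos.2 hτ0)]
    field_simp
  -- lower bound for the action term
  have hact : ∀ x y : Ed d,
      (κ + 1) * ‖y - x‖ + τ * C - τ * Finf ≤ dAct L f τ x y := by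
    intro x y
    have h1 : (κ + 1) * ‖τ⁻¹ • (y - x)‖ + C ≤ L x (τ⁻¹ • (y - x)) := hC x _
    have h2 : -Finf ≤ f x := (abs_le.1 (hfb x)).1
    have h3 : τ * ((κ + 1) * ‖τ⁻¹ • (y - x)‖ + C + f x) ≤
        τ * (L x (τ⁻¹ • (y - x)) + f x) :=
      mul_le_mul_of_nonneg_left (by linarith) hτ0.le
    have h4 : τ * ((κ + 1) * ‖τ⁻¹ • (y - x)‖) = (κ + 1) * ‖y - x‖ := by
      rw [show τ * ((κ + 1) * ‖τ⁻¹ • (y - x)‖) = (κ + 1) * (τ * ‖τ⁻¹ • (y - x)‖) by ring,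
        hv x y]
    have h5 : τ * (-Finf) ≤ τ * f x := mul_le_mul_of_nonneg_left h2 hτ0.le
    unfold dAct
    nlinarith
  -- upper bound for the diagonal action term
  have hdiag : ∀ y : Ed d, dAct L f τ y y ≤ τ * (M0 + Finf) := by
    intro y
    unfold dAct
    rw [sub_self, smul_zero]
    exact mul_le_mul_of_nonneg_left
      (by have := hM0 y; have := (abs_le.1 (hfb y)).2; linarith) hτ0.le
  constructor
  · -- part (a)
    intro y x hmin
    have key := hmin y
    have hd1 : dAct L f τ x y ≥ (κ + 1) * ‖y - x‖ + τ * C - τ * Finf := hact x y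
    have hd2 : dAct L f τ y y ≤ τ * (M0 + Finf) := hdiag y
    have hlip : (1 - τ * lam) * (φ y - φ x) ≤ κ * ‖y - x‖ := by
      have h := (le_abs_self (φ y - φ x)).trans (hφLip y x)
      have h2 := mul_le_mul_of_nonneg_left h ha0
      have h3 : (1 - τ * lam) * (κ * ‖y - x‖) ≤ κ * ‖y - x‖ := by
        nlinarith [norm_nonneg (y - x), mul_nonneg hκ.le (norm_nonneg (y - x))]
      linarith
    have hfin : ‖y - x‖ ≤ τ * (M0 + 2*Finf - C) := by nlinarith
    have hDle : M0 + 2*Finf - C ≤ |M0| + |C| + 2*Finf + 1 := by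
      have := le_abs_self M0
      have := neg_abs_le C
      linarith
    rw [norm_sub_rev]
    calc ‖y - x‖ ≤ τ * (M0 + 2*Finf - C) := hfin
      _ ≤ τ * (|M0| + |C| + 2*Finf + 1) := mul_le_mul_of_nonneg_left hDle hτ0.le
  · -- part (b)
    intro y
    set Ct := Chat + |M0| + |C| + Finf + 1 with hCt
    have hlow : ∀ x : Ed d,
        φ y - τ * (Chat + Finf - C) ≤ (1 - τ * lam) * φ x + dAct L f τ x y := by
      intro x
      have h1 := hact x y
      have h2 : φ y - φ x ≤ κ * ‖y - x‖ :=
        (le_abs_self (φ y - φ x)).trans (hφLip y x)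
      have h3 : (τ * lam) * φ x ≤ τ * Chat := by
        have hx1 : (τ * lam) * φ x ≤ τ * (lam * |φ x|) := by
          have := le_abs_self (φ x)
          nlinarith
        have hx2 : τ * (lam * |φ x|) ≤ τ * Chat :=
          mul_le_mul_of_nonneg_left (hφb' x) hτ0.le
        linarith
      have h4 : (0:ℝ) ≤ ‖y - x‖ := norm_nonneg _
      nlinarith
    have hbdd : BddBelow (Set.range fun x : Ed d =>
        (1 - τ * lam) * φ x + dAct L f τ x y) :=
      ⟨φ y - τ * (Chat + Finf - C), by rintro _ ⟨x, rfl⟩; exact hlow x⟩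
    have hI1 : φ y - τ * (Chat + Finf - C) ≤
        ⨅ x : Ed d, ((1 - τ * lam) * φ x + dAct L f τ x y) := le_ciInf hlow
    have hI2 : (⨅ x : Ed d, ((1 - τ * lam) * φ x + dAct L f τ x y)) ≤
        (1 - τ * lam) * φ y + dAct L f τ y y := ciInf_le hbdd y
    have hup : (1 - τ * lam) * φ y + dAct L f τ y y ≤ φ y + τ * (Chat + M0 + Finf) := by
      have h3 : (τ * lam) * φ y ≥ -(τ * Chat) := by
        have := neg_abs_le (φ y)
        have hx2 : τ * (lam * |φ y|) ≤ τ * Chat :=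
          mul_le_mul_of_nonneg_left (hφb' y) hτ0.le
        nlinarith
      have := hdiag y
      nlinarith
    have hc1 : τ * (Chat + M0 + Finf) ≤ τ * Ct := by
      apply mul_le_mul_of_nonneg_left _ hτ0.le
      have := le_abs_self M0
      have := abs_nonneg C
      rw [hCt]; linarith
    have hc2 : τ * (Chat + Finf - C) ≤ τ * Ct := by
      apply mul_le_mul_of_nonneg_left _ hτ0.le
      have := neg_abs_le C
      have := abs_nonneg M0
      rw [hCt]; linarith
    rw [abs_le]
    constructor <;> linarith
end
end

section
/- Let d ≥ 1, τ ∈ (0,1), λ ∈ (0,1]. Let L : ℝ^d × ℝ^d → ℝ be continuous, ℤ^d-periodic in its first variable and bounded below, let f : ℝ^d → ℝ be continuous and ℤ^d-periodic, and let u be the unique ℤ^d-periodic continuous solution of the discrete discounted Lax–Oleinik equation with coupling f (L, f, u are regarded as functions on 𝕋^d by periodicity). Let μ be a τ-holonomic Borel probability measure on 𝕋^d × ℝ^d such that (x,v) ↦ L(x,v) + f(x) is μ-integrable. Then ∫_{𝕋^d × ℝ^d} ( L(x,v) + f(x) − λ u(x) ) dμ(x,v) ≥ 0. -/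
open MeasureTheory Set Filter

noncomputable section

/-- The flat torus `𝕋^d = ℝ^d/ℤ^d`. -/
abbrev Td (d : ℕ) := Fin d → AddCircle (1 : ℝ)

/-- The canonical projection `Π : ℝ^d → 𝕋^d`. -/
def projT {d : ℕ} (x : Ed d) : Td d := fun i => (x i : AddCircle (1:ℝ))

/-- A Borel probability measure `μ` on `𝕋^d × ℝ^d` is `τ`-holonomic if
`∫ φ(x + Π(τv)) dμ = ∫ φ(x) dμ` for every continuous `φ : 𝕋^d → ℝ`. -/
def Holonomic {d : ℕ} (τ : ℝ) (μ : Measure (Td d × Ed d)) : Prop :=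
  ∀ φ : Td d → ℝ, Continuous φ →
    ∫ p, φ (p.1 + projT (τ • p.2)) ∂μ = ∫ p, φ p.1 ∂μ

lemma projT_oqm {d : ℕ} : IsOpenQuotientMap (projT (d := d)) := by
  have h1 : IsOpenQuotientMap (Pi.map (fun (_ : Fin d) (r : ℝ) => (r : AddCircle (1:ℝ)))) :=
    IsOpenQuotientMap.piMap fun i => QuotientAddGroup.isOpenQuotientMap_mk
  have h2 : IsOpenQuotientMap (⇑(EuclideanSpace.equiv (Fin d) ℝ).toHomeomorph) :=
    ⟨(EuclideanSpace.equiv (Fin d) ℝ).surjective,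
     (EuclideanSpace.equiv (Fin d) ℝ).toHomeomorph.continuous,
     (EuclideanSpace.equiv (Fin d) ℝ).toHomeomorph.isOpenMap⟩
  have : projT (d := d) = (Pi.map (fun (_ : Fin d) (r : ℝ) => (r : AddCircle (1:ℝ)))) ∘
      ⇑(EuclideanSpace.equiv (Fin d) ℝ).toHomeomorph := rfl
  rw [this]
  exact h1.comp h2

lemma projT_add {d : ℕ} (x y : Ed d) : projT (x + y) = projT x + projT y := by
  funext i; simp only [projT]; rfl

/-- For any `τ`-holonomic probability measure `μ`, the discounted action
functional `∫ (L + f - λu) dμ` is nonnegative. -/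
theorem stmt5 (d : ℕ) (hd : 1 ≤ d) (τ lam : ℝ)
    (hτ : τ ∈ Set.Ioo (0:ℝ) 1) (hlam : lam ∈ Set.Ioc (0:ℝ) 1)
    (L : Ed d → Ed d → ℝ) (hLc : Continuous fun p : Ed d × Ed d => L p.1 p.2)
    (hLper : ZPeriodic1 L) (hLbd : ∃ c : ℝ, ∀ x v : Ed d, c ≤ L x v)
    (f : Ed d → ℝ) (hfc : Continuous f) (hfper : ZPeriodic f)
    (u : Ed d → ℝ) (hu : IsDLOSol L f τ lam u)
    (Lb : Td d → Ed d → ℝ) (fb ub : Td d → ℝ)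
    (hLb : ∀ (x v : Ed d), Lb (projT x) v = L x v)
    (hfb : ∀ x : Ed d, fb (projT x) = f x)
    (hub : ∀ x : Ed d, ub (projT x) = u x)
    (μ : Measure (Td d × Ed d)) (hμ : IsProbabilityMeasure μ)
    (hhol : Holonomic τ μ)
    (hint : Integrable (fun p : Td d × Ed d => Lb p.1 p.2 + fb p.1) μ) :
    0 ≤ ∫ p, (Lb p.1 p.2 + fb p.1 - lam * ub p.1) ∂μ := by
  obtain ⟨hτ0, hτ1⟩ := hτ
  have hτne : τ ≠ 0 := ne_of_gt hτ0
  -- continuity of ub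
  have hubc : Continuous ub := by
    rw [← projT_oqm.continuous_comp_iff]
    have : ub ∘ projT = u := funext hub
    rw [this]; exact hu.1
  -- bound on ub
  obtain ⟨C, hC⟩ : ∃ C, ∀ t : Td d, ‖ub t‖ ≤ C := by
    have := (isCompact_univ (X := Td d)).exists_bound_of_continuousOn
      (hubc.norm.continuousOn)
    obtain ⟨C, hC⟩ := this
    exact ⟨C, fun t => by simpa using hC t (mem_univ t)⟩
  -- the shift map is continuous
  have hshift : Continuous fun p : Td d × Ed d => p.1 + projT (τ • p.2) :=
    continuous_fst.add (projT_oqm.continuous.comp ((continuous_const (y := τ)).smul continuous_snd))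
  -- integrability of ub ∘ fst and shifted ub
  have hint1 : Integrable (fun p : Td d × Ed d => ub p.1) μ :=
    (integrable_const C).mono' (hubc.comp continuous_fst).aestronglyMeasurable
      (ae_of_all _ fun p => hC _)
  have hint2 : Integrable (fun p : Td d × Ed d => ub (p.1 + projT (τ • p.2))) μ :=
    (integrable_const C).mono' (hubc.comp hshift).aestronglyMeasurable
      (ae_of_all _ fun p => hC _)
  -- pointwise inequality
  have hpt : ∀ p : Td d × Ed d,
      (ub (p.1 + projT (τ • p.2)) - ub p.1) / τ ≤ Lb p.1 p.2 + fb p.1 - lam * ub p.1 := by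
    intro ⟨t, v⟩
    obtain ⟨x, hx⟩ := projT_oqm.surjective t
    subst hx
    have key := (hu.2.2 (x + τ • v)).1 (Set.mem_range_self x)
    have hre : τ⁻¹ • ((x + τ • v) - x) = v := by
      rw [add_sub_cancel_left, smul_smul, inv_mul_cancel₀ hτne, one_smul]
    rw [dAct, hre] at key
    -- key : u (x + τ•v) ≤ (1 - τ*lam) * u x + τ * (L x v + f x)
    have h1 : projT x + projT (τ • v) = projT (x + τ • v) := (projT_add x (τ • v)).symm
    rw [h1, hub, hLb, hfb, hub]
    rw [div_le_iff₀ hτ0]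
    nlinarith [key]
  -- integral of the shift difference is zero
  have hzero : ∫ p, (ub (p.1 + projT (τ • p.2)) - ub p.1) / τ ∂μ = 0 := by
    rw [integral_div, integral_sub hint2 hint1, hhol ub hubc, sub_self, zero_div]
  -- target integrand is integrable
  have hintT : Integrable (fun p : Td d × Ed d => Lb p.1 p.2 + fb p.1 - lam * ub p.1) μ :=
    hint.sub (hint1.const_mul lam)
  calc (0:ℝ) = ∫ p, (ub (p.1 + projT (τ • p.2)) - ub p.1) / τ ∂μ := hzero.symm
    _ ≤ ∫ p, (Lb p.1 p.2 + fb p.1 - lam * ub p.1) ∂μ :=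
        integral_mono ((hint2.sub hint1).div_const τ) hintT hpt
end
end

section
/- Let d ≥ 1, τ ∈ (0,1), λ ∈ (0,1]. Let L : ℝ^d × ℝ^d → ℝ be continuous, ℤ^d-periodic in its first variable and bounded below, let f : ℝ^d → ℝ be continuous and ℤ^d-periodic, and let u be the unique ℤ^d-periodic continuous solution of the discrete discounted Lax–Oleinik equation with coupling f (L, f, u regarded as functions on 𝕋^d by periodicity). Let μ be a τ-holonomic Borel probability measure on 𝕋^d × ℝ^d such that (x,v) ↦ L(x,v) + f(x) is μ-integrable and ∫ ( L(x,v) + f(x) − λ u(x) ) dμ = 0. Then at every point (x,v) in the support of μ (in particular μ-almost everywhere) the calibration identity u(x + Π(τv)) = (1−τλ) u(x) + τ ( L(x,v) + f(x) ) holds. -/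
open MeasureTheory Set Filter

noncomputable section

/-- A nonnegative continuous integrable function with zero integral vanishes at
any point all of whose neighborhoods have positive measure. -/
theorem aux_vanish {α : Type*} [TopologicalSpace α] [MeasurableSpace α]
    [OpensMeasurableSpace α] (μ : Measure α) [IsFiniteMeasure μ]
    (g : α → ℝ) (hgc : Continuous g) (hg0 : ∀ x, 0 ≤ g x)
    (hgi : Integrable g μ) (hIg : ∫ x, g x ∂μ = 0)
    (p : α) (hp : ∀ s : Set α, IsOpen s → p ∈ s → 0 < μ s) : g p = 0 := by
  by_contra hne
  have hpos : 0 < g p := lt_of_le_of_ne (hg0 p) (Ne.symm hne)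
  set s : Set α := {q | g p / 2 < g q} with hs
  have hso : IsOpen s := isOpen_lt continuous_const hgc
  have hps : p ∈ s := by
    show g p / 2 < g p
    linarith
  have hμs : 0 < μ s := hp s hso hps
  have hsm : MeasurableSet s := hso.measurableSet
  have hfin : μ s ≠ ⊤ := measure_ne_top μ s
  have h1 : g p / 2 * (μ s).toReal ≤ ∫ q in s, g q ∂μ :=
    by have := setIntegral_ge_of_const_le_real hsm hfin (fun q hq => le_of_lt hq) (hgi.integrableOn); rw [measureReal_def] at this; exact this
  have h2 : 0 ≤ ∫ q in sᶜ, g q ∂μ :=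
    setIntegral_nonneg hsm.compl (fun q _ => hg0 q)
  have h3 : ∫ q in s, g q ∂μ + ∫ q in sᶜ, g q ∂μ = ∫ q, g q ∂μ :=
    integral_add_compl hsm hgi
  have hts : 0 < (μ s).toReal := ENNReal.toReal_pos (ne_of_gt hμs) hfin
  have hprod : 0 < g p / 2 * (μ s).toReal := mul_pos (by linarith) hts
  linarith

/-- If a `τ`-holonomic probability measure `μ` satisfies
`∫ (L + f - λu) dμ = 0`, then the calibration identity holds at every point of
the support of `μ`. -/
theorem stmt6 (d : ℕ) (hd : 1 ≤ d) (τ lam : ℝ)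
    (hτ : τ ∈ Set.Ioo (0:ℝ) 1) (hlam : lam ∈ Set.Ioc (0:ℝ) 1)
    (L : Ed d → Ed d → ℝ) (hLc : Continuous fun p : Ed d × Ed d => L p.1 p.2)
    (hLper : ZPeriodic1 L) (hLbd : ∃ c : ℝ, ∀ x v : Ed d, c ≤ L x v)
    (f : Ed d → ℝ) (hfc : Continuous f) (hfper : ZPeriodic f)
    (u : Ed d → ℝ) (hu : IsDLOSol L f τ lam u)
    (Lb : Td d → Ed d → ℝ) (fb ub : Td d → ℝ)
    (hLb : ∀ (x v : Ed d), Lb (projT x) v = L x v)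
    (hfb : ∀ x : Ed d, fb (projT x) = f x)
    (hub : ∀ x : Ed d, ub (projT x) = u x)
    (μ : Measure (Td d × Ed d)) (hμ : IsProbabilityMeasure μ)
    (hhol : Holonomic τ μ)
    (hint : Integrable (fun p : Td d × Ed d => Lb p.1 p.2 + fb p.1) μ)
    (hzero : ∫ p, (Lb p.1 p.2 + fb p.1 - lam * ub p.1) ∂μ = 0) :
    ∀ p : Td d × Ed d,
      (∀ s : Set (Td d × Ed d), IsOpen s → p ∈ s → 0 < μ s) →
      ub (p.1 + projT (τ • p.2)) = (1 - τ * lam) * ub p.1 + τ * (Lb p.1 p.2 + fb p.1) := by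
  intro p hp
  obtain ⟨hτ0, hτ1⟩ := hτ
  have hoq : IsOpenQuotientMap (projT (d := d)) :=
    (IsOpenQuotientMap.piMap (fun _ => QuotientAddGroup.isOpenQuotientMap_mk)).comp
      (PiLp.homeomorph 2 _).isOpenQuotientMap
  have hadd : ∀ a b : Ed d, projT (a + b) = projT a + projT b := fun a b => rfl
  have hubc : Continuous ub := by
    rw [hoq.isQuotientMap.continuous_iff]
    have : (ub ∘ projT) = u := funext fun x => hub x
    rw [this]; exact hu.1
  have hfbc : Continuous fb := by
    rw [hoq.isQuotientMap.continuous_iff]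
    have : (fb ∘ projT) = f := funext fun x => hfb x
    rw [this]; exact hfc
  have hLbc : Continuous (fun q : Td d × Ed d => Lb q.1 q.2) := by
    rw [(hoq.prodMap IsOpenQuotientMap.id).isQuotientMap.continuous_iff]
    have : ((fun q : Td d × Ed d => Lb q.1 q.2) ∘ Prod.map projT id)
        = fun q : Ed d × Ed d => L q.1 q.2 := funext fun q => hLb q.1 q.2
    rw [this]; exact hLc
  have hshiftc : Continuous fun q : Td d × Ed d => q.1 + projT (τ • q.2) := by
    apply Continuous.add continuous_fst
    exact hoq.continuous.comp ((continuous_const_smul τ).comp continuous_snd)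
  have hgc : Continuous (fun q : Td d × Ed d =>
      (1 - τ * lam) * ub q.1 + τ * (Lb q.1 q.2 + fb q.1) - ub (q.1 + projT (τ • q.2))) := by
    apply Continuous.sub
    · exact (continuous_const.mul (hubc.comp continuous_fst)).add
        (continuous_const.mul (hLbc.add (hfbc.comp continuous_fst)))
    · exact hubc.comp hshiftc
  have hg0 : ∀ q : Td d × Ed d,
      0 ≤ (1 - τ * lam) * ub q.1 + τ * (Lb q.1 q.2 + fb q.1) - ub (q.1 + projT (τ • q.2)) := by
    intro q
    obtain ⟨x, hx⟩ := hoq.surjective q.1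
    have key : u (x + τ • q.2) ≤ (1 - τ * lam) * u x + dAct L f τ x (x + τ • q.2) :=
      (hu.2.2 (x + τ • q.2)).1 ⟨x, rfl⟩
    have hd : dAct L f τ x (x + τ • q.2) = τ * (L x q.2 + f x) := by
      unfold dAct
      rw [add_sub_cancel_left, smul_smul, inv_mul_cancel₀ (ne_of_gt hτ0), one_smul]
    have e1 : ub q.1 = u x := by rw [← hx, hub]
    have e2 : Lb q.1 q.2 = L x q.2 := by rw [← hx, hLb]
    have e3 : fb q.1 = f x := by rw [← hx, hfb]
    have e4 : ub (q.1 + projT (τ • q.2)) = u (x + τ • q.2) := by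
      rw [← hx, ← hadd, hub]
    rw [e1, e2, e3, e4, sub_nonneg]
    rw [hd] at key; linarith
  haveI : Fact ((0:ℝ) < 1) := ⟨one_pos⟩
  obtain ⟨C, hC⟩ : ∃ C : ℝ, ∀ X : Td d, ‖ub X‖ ≤ C := by
    obtain ⟨X0, -, hX0⟩ := isCompact_univ.exists_isMaxOn univ_nonempty hubc.norm.continuousOn
    exact ⟨‖ub X0‖, fun X => hX0 (mem_univ X)⟩
  have i1 : Integrable (fun q : Td d × Ed d => ub q.1) μ := by
    refine (integrable_const C).mono' ((hubc.comp continuous_fst).aestronglyMeasurable) ?_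
    exact Filter.Eventually.of_forall fun q => hC q.1
  have i2 : Integrable (fun q : Td d × Ed d => ub (q.1 + projT (τ • q.2))) μ := by
    refine (integrable_const C).mono' ((hubc.comp hshiftc).aestronglyMeasurable) ?_
    exact Filter.Eventually.of_forall fun q => hC _
  have iA : Integrable (fun q : Td d × Ed d =>
      (1 - τ * lam) * ub q.1 + τ * (Lb q.1 q.2 + fb q.1)) μ :=
    (i1.const_mul _).add (hint.const_mul _)
  have ig : Integrable (fun q : Td d × Ed d =>
      (1 - τ * lam) * ub q.1 + τ * (Lb q.1 q.2 + fb q.1)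
        - ub (q.1 + projT (τ • q.2))) μ := iA.sub i2
  have hIg : ∫ q, ((1 - τ * lam) * ub q.1 + τ * (Lb q.1 q.2 + fb q.1)
      - ub (q.1 + projT (τ • q.2))) ∂μ = 0 := by
    have hsplit : ∫ q, ((1 - τ * lam) * ub q.1 + τ * (Lb q.1 q.2 + fb q.1)
          - ub (q.1 + projT (τ • q.2))) ∂μ
        = ((1 - τ * lam) * ∫ q, ub q.1 ∂μ + τ * ∫ q, (Lb q.1 q.2 + fb q.1) ∂μ)
          - ∫ q, ub (q.1 + projT (τ • q.2)) ∂μ := by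
      rw [integral_sub iA i2, integral_add (i1.const_mul _) (hint.const_mul _),
        integral_const_mul, integral_const_mul]
    have hφ : ∫ q, ub (q.1 + projT (τ • q.2)) ∂μ = ∫ q, ub q.1 ∂μ := hhol ub hubc
    have hz : ∫ q, (Lb q.1 q.2 + fb q.1) ∂μ = lam * ∫ q, ub q.1 ∂μ := by
      have h := hzero
      rw [integral_sub hint (i1.const_mul lam), integral_const_mul, sub_eq_zero] at h
      exact h
    rw [hsplit, hφ, hz]; ring
  have hgp := aux_vanish μ _ hgc hg0 ig hIg p hp
  linarith
end
end

section
/- Let d ≥ 1, let L : ℝ^d × ℝ^d → ℝ be continuous, ℤ^d-periodic in its first variable and superlinear, and let F∞, C, C₀ > 0. Then there exists R > 0, depending only on L, F∞, C and C₀, with the following property: for all τ ∈ (0,1), λ ∈ (0,1], every continuous ℤ^d-periodic f with ‖f‖∞ ≤ F∞, and every ℤ^d-periodic function u : ℝ^d → ℝ that is Lipschitz with constant at most C and satisfies λ‖u‖∞ ≤ C₀, any pair (x,v) ∈ ℝ^d × ℝ^d satisfying τ ( L(x,v) + f(x) ) = u(x + τv) − (1−τλ) u(x) has |v| ≤ R.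 -/
open MeasureTheory Set Filter

noncomputable section

/-- Uniform bound on the velocities of calibrated pairs: any `(x,v)` satisfying
`τ(L(x,v)+f(x)) = u(x+τv) - (1-τλ)u(x)` with `u` periodic, `C`-Lipschitz and
`λ‖u‖∞ ≤ C₀` has `|v| ≤ R`, with `R` depending only on `L, F∞, C, C₀`. -/
theorem stmt7 (d : ℕ) (hd : 1 ≤ d)
    (L : Ed d → Ed d → ℝ) (hLc : Continuous fun p : Ed d × Ed d => L p.1 p.2)
    (hLper : ZPeriodic1 L) (hLsl : Superlinear L)
    (Finf C C0 : ℝ) (hFinf : 0 < Finf) (hC : 0 < C) (hC0 : 0 < C0) :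
    ∃ R : ℝ, 0 < R ∧
      ∀ τ lam : ℝ, τ ∈ Set.Ioo (0:ℝ) 1 → lam ∈ Set.Ioc (0:ℝ) 1 →
        ∀ f : Ed d → ℝ, Continuous f → ZPeriodic f → (∀ x, |f x| ≤ Finf) →
          ∀ u : Ed d → ℝ, ZPeriodic u →
            (∀ a b : Ed d, |u a - u b| ≤ C * ‖a - b‖) →
            (∀ x : Ed d, lam * |u x| ≤ C0) →
            ∀ x v : Ed d,
              τ * (L x v + f x) = u (x + τ • v) - (1 - τ * lam) * u x → ‖v‖ ≤ R := by
  obtain ⟨CK, hCK⟩ := hLsl (C + 1) (by linarith)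
  refine ⟨max 1 (C0 + Finf - CK), lt_of_lt_of_le one_pos (le_max_left _ _), ?_⟩
  intro τ lam hτ hlam f hf hfper hfb u huper huLip hub x v heq
  have hτ0 : 0 < τ := hτ.1
  have hlam0 : 0 < lam := hlam.1
  have hn : ‖(x + τ • v) - x‖ = τ * ‖v‖ := by
    simp [norm_smul, abs_of_pos hτ0]
  have h1 : u (x + τ • v) - u x ≤ C * (τ * ‖v‖) := by
    have h := (abs_le.mp (huLip (x + τ • v) x)).2
    rw [hn] at h; exact h
  have h2 : lam * u x ≤ C0 := by
    have : lam * u x ≤ lam * |u x| :=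
      mul_le_mul_of_nonneg_left (le_abs_self _) hlam0.le
    linarith [hub x]
  have h3 : -Finf ≤ f x := (abs_le.mp (hfb x)).1
  have h4 : (C + 1) * ‖v‖ + CK ≤ L x v := hCK x v
  have h5 : τ * ((C + 1) * ‖v‖ + CK - Finf) ≤ τ * (L x v + f x) :=
    mul_le_mul_of_nonneg_left (by linarith) hτ0.le
  have h6 : τ * (L x v + f x) ≤ C * (τ * ‖v‖) + τ * (lam * u x) := by
    rw [heq]; ring_nf; nlinarith [h1]
  have h7 : τ * ‖v‖ ≤ τ * (C0 + Finf - CK) := by nlinarith [h2, h5, h6]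
  have h8 : ‖v‖ ≤ C0 + Finf - CK := le_of_mul_le_mul_left h7 hτ0
  exact h8.trans (le_max_right _ _)
end
end

section
/- Let d ≥ 1, τ ∈ (0,1), λ ∈ (0,1]. Let L : ℝ^d × ℝ^d → ℝ be continuous, ℤ^d-periodic in its first variable and superlinear, and let f : ℝ^d → ℝ be continuous and ℤ^d-periodic. Let u be the unique ℤ^d-periodic continuous solution of the λ-discounted discrete Lax–Oleinik equation u(y) = inf_{x∈ℝ^d}((1−τλ)u(x) + 𝓛_{τ,f}(x,y)), and suppose v : ℝ^d → ℝ is ℤ^d-periodic continuous and c̄ ∈ ℝ satisfy the ergodic discrete Lax–Oleinik equation v(y) + τ c̄ = inf_{x∈ℝ^d}( v(x) + 𝓛_{τ,f}(x,y) ) for all y ∈ ℝ^d. Then ‖u − c̄/λ − v‖∞ ≤ ‖v‖∞; in particular ‖u − c̄/λ‖∞ ≤ 2‖v‖∞. -/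
open MeasureTheory Set Filter

noncomputable section

lemma zper_bdd {d : ℕ} {h : Ed d → ℝ} (hc : Continuous h) (hp : ZPeriodic h) :
    BddAbove (Set.range h) ∧ BddBelow (Set.range h) := by
  set K : Set (Ed d) :=
    (fun g : Fin d → ℝ => (WithLp.equiv 2 (Fin d → ℝ)).symm g) ''
      (Set.univ.pi fun _ => Set.Icc (0:ℝ) 1) with hKdef
  have hK : IsCompact K :=
    (isCompact_univ_pi fun _ => isCompact_Icc).image (PiLp.continuous_toLp 2 fun _ => ℝ)
  have hsub : Set.range h ⊆ h '' K := by
    rintro - ⟨x, rfl⟩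
    set y : Ed d := (WithLp.equiv 2 (Fin d → ℝ)).symm (fun i => Int.fract (x i)) with hy
    refine ⟨y, ⟨_, ?_, rfl⟩, ?_⟩
    · intro i _
      exact ⟨Int.fract_nonneg _, (Int.fract_lt_one _).le⟩
    · have hx : y + intVec (fun i => ⌊x i⌋) = x := by
        ext i
        show y i + (⌊x i⌋ : ℝ) = x i
        have : y i = Int.fract (x i) := rfl
        rw [this]
        exact Int.fract_add_floor (x i)
      have h2 := hp y (fun i => ⌊x i⌋)
      rw [hx] at h2
      exact h2.symm
  have hcpt : IsCompact (h '' K) := hK.image hc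
  exact ⟨hcpt.bddAbove.mono hsub, hcpt.bddBelow.mono hsub⟩


/-- Comparison between the discounted and the ergodic discrete Lax–Oleinik
solutions: `‖u - c̄/λ - v‖∞ ≤ ‖v‖∞`, hence `‖u - c̄/λ‖∞ ≤ 2‖v‖∞`. -/
theorem stmt14 (d : ℕ) (hd : 1 ≤ d) (τ lam : ℝ)
    (hτ : τ ∈ Set.Ioo (0:ℝ) 1) (hlam : lam ∈ Set.Ioc (0:ℝ) 1)
    (L : Ed d → Ed d → ℝ) (hLc : Continuous fun p : Ed d × Ed d => L p.1 p.2)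
    (hLper : ZPeriodic1 L) (hLsl : Superlinear L)
    (f : Ed d → ℝ) (hfc : Continuous f) (hfper : ZPeriodic f)
    (u : Ed d → ℝ) (hu : IsDLOSol L f τ lam u)
    (v : Ed d → ℝ) (hvc : Continuous v) (hvper : ZPeriodic v) (c : ℝ)
    (hv : ∀ y : Ed d,
      IsGLB (Set.range fun x => v x + dAct L f τ x y) (v y + τ * c)) :
    (∀ x : Ed d, |u x - c / lam - v x| ≤ ⨆ y : Ed d, |v y|) ∧
      (∀ x : Ed d, |u x - c / lam| ≤ 2 * ⨆ y : Ed d, |v y|) := by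
  obtain ⟨hτ0, hτ1⟩ := hτ
  obtain ⟨hl0, hl1⟩ := hlam
  have htl0 : 0 < τ * lam := mul_pos hτ0 hl0
  have htl1 : τ * lam < 1 := lt_of_le_of_lt (by nlinarith) hτ1
  have hone : 0 ≤ 1 - τ * lam := by linarith
  obtain ⟨huc, hup, hueq⟩ := hu
  have hφc : Continuous fun x : Ed d => u x - c / lam - v x :=
    (huc.sub continuous_const).sub hvc
  have hφp : ZPeriodic fun x : Ed d => u x - c / lam - v x := fun x k => by
    simp only [hup x k, hvper x k]
  obtain ⟨hφa, hφb⟩ := zper_bdd hφc hφp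
  obtain ⟨hVa, -⟩ := zper_bdd (h := fun x => |v x|) hvc.abs
    (fun x k => by simp only [hvper x k])
  set V : ℝ := ⨆ y : Ed d, |v y| with hV
  set S : ℝ := ⨆ x : Ed d, (u x - c / lam - v x) with hS
  set J : ℝ := ⨅ x : Ed d, (u x - c / lam - v x) with hJ
  have hvleV : ∀ x : Ed d, |v x| ≤ V := fun x => le_ciSup hVa x
  have hφleS : ∀ x : Ed d, u x - c / lam - v x ≤ S := fun x => le_ciSup hφa x
  have hJleφ : ∀ x : Ed d, J ≤ u x - c / lam - v x := fun x => ciInf_le hφb x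
  have hc' : (1 - τ * lam) * (c / lam) = c / lam - τ * c := by
    field_simp
  have hkeyU : ∀ x : Ed d, (1 - τ * lam) * u x - v x
      ≤ (1 - τ * lam) * S + (c / lam - τ * c) + τ * lam * V := by
    intro x
    have h1 : (1 - τ * lam) * (u x - c / lam - v x) ≤ (1 - τ * lam) * S :=
      mul_le_mul_of_nonneg_left (hφleS x) hone
    have h2 : -v x ≤ V := (neg_le_abs _).trans (hvleV x)
    have h3 : τ * lam * (-v x) ≤ τ * lam * V :=
      mul_le_mul_of_nonneg_left h2 htl0.le
    nlinarith [hc']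
  have hkeyL : ∀ x : Ed d, (1 - τ * lam) * J + (c / lam - τ * c) - τ * lam * V
      ≤ (1 - τ * lam) * u x - v x := by
    intro x
    have h1 : (1 - τ * lam) * J ≤ (1 - τ * lam) * (u x - c / lam - v x) :=
      mul_le_mul_of_nonneg_left (hJleφ x) hone
    have h2 : v x ≤ V := (le_abs_self _).trans (hvleV x)
    have h3 : τ * lam * v x ≤ τ * lam * V :=
      mul_le_mul_of_nonneg_left h2 htl0.le
    nlinarith [hc']
  have hφup : ∀ y : Ed d, u y - c / lam - v y ≤ (1 - τ * lam) * S + τ * lam * V := by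
    intro y
    have key : u y - (v y + τ * c)
        ≤ (1 - τ * lam) * S + (c / lam - τ * c) + τ * lam * V := by
      refine le_of_forall_pos_le_add ?_
      intro ε hε
      obtain ⟨a, ⟨x, rfl⟩, -, hlt⟩ :=
        (hv y).exists_between (by linarith : v y + τ * c < v y + τ * c + ε)
      have h1 : u y ≤ (1 - τ * lam) * u x + dAct L f τ x y := (hueq y).1 ⟨x, rfl⟩
      have h2 := hkeyU x
      simp only at hlt
      linarith
    linarith
  have hφlo : ∀ y : Ed d, (1 - τ * lam) * J - τ * lam * V ≤ u y - c / lam - v y := by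
    intro y
    have key : (1 - τ * lam) * J + (c / lam - τ * c) - τ * lam * V
        ≤ u y - (v y + τ * c) := by
      by_contra hcon
      push_neg at hcon
      obtain ⟨a, ⟨x, rfl⟩, -, hlt⟩ := (hueq y).exists_between
        (show u y < u y + (((1 - τ * lam) * J + (c / lam - τ * c) - τ * lam * V)
          - (u y - (v y + τ * c))) by linarith)
      have h1 : v y + τ * c ≤ v x + dAct L f τ x y := (hv y).1 ⟨x, rfl⟩
      have h2 := hkeyL x
      simp only at hlt
      linarith
    linarith
  have hSV : S ≤ V := by
    have h1 : S ≤ (1 - τ * lam) * S + τ * lam * V := ciSup_le hφup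
    nlinarith
  have hJV : -V ≤ J := by
    have h1 : (1 - τ * lam) * J - τ * lam * V ≤ J := le_ciInf hφlo
    nlinarith
  have main : ∀ x : Ed d, |u x - c / lam - v x| ≤ V := by
    intro x
    rw [abs_le]
    exact ⟨by linarith [hJV, hJleφ x], by linarith [hSV, hφleS x]⟩
  refine ⟨main, fun x => ?_⟩
  have h1 : |u x - c / lam| ≤ |u x - c / lam - v x| + |v x| := by
    have := abs_add_le (u x - c / lam - v x) (v x)
    simpa using this
  linarith [main x, hvleV x]
end
end

section
/- Let d ≥ 1 and λ > 0. Let H : ℝ^d × ℝ^d → ℝ be continuous and ℤ^d-periodic in its first variable, and define L(x,v) := sup_{p ∈ ℝ^d} ( ⟨p,v⟩ − H(x,p) ), assumed finite for all (x,v). Let u : ℝ^d → ℝ be ℤ^d-periodic continuous, and suppose that for every ε > 0 there exists a C^∞ ℤ^d-periodic function u_ε : ℝ^d → ℝ with ‖u − u_ε‖∞ ≤ ε and λ u(x) + H(x, Du_ε(x)) ≤ ε for all x ∈ ℝ^d. Let μ be a closed Borel probability measure on 𝕋^d × ℝ^d such that L is μ-integrable (L, u regarded on 𝕋^d by periodicity).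 Then ∫_{𝕋^d × ℝ^d} ( L(x,v) − λ u(x) ) dμ(x,v) ≥ 0. -/
open MeasureTheory Set Filter

noncomputable section

/-- A Borel probability measure `μ` on `𝕋^d × ℝ^d` is a closed measure:
`∫ |v| dμ < ∞` and `∫ ⟨v, Dφ(x)⟩ dμ = 0` for every `ℤ^d`-periodic `C¹`
function `φ` on `ℝ^d` (whose differential descends to `𝕋^d` as `G`). -/
def ClosedMeasure {d : ℕ} (μ : Measure (Td d × Ed d)) : Prop :=
  Integrable (fun p : Td d × Ed d => ‖p.2‖) μ ∧
    ∀ φ : Ed d → ℝ, ContDiff ℝ 1 φ → ZPeriodic φ →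
      ∀ G : Td d → (Ed d →L[ℝ] ℝ), (∀ x : Ed d, G (projT x) = fderiv ℝ φ x) →
        ∫ p, G p.1 p.2 ∂μ = 0

/-- The real inner product on `ℝ^d`. -/
def rinner {d : ℕ} (x y : Ed d) : ℝ := inner ℝ x y

namespace Aux

instance fact01 : Fact ((0:ℝ) < 1) := ⟨zero_lt_one⟩

variable {d : ℕ}

/-- measurable representative map -/
def rep (d : ℕ) : Td d → Ed d :=
  fun y => WithLp.toLp 2 fun i => ((AddCircle.measurableEquivIco (1:ℝ) 0 (y i) : Ico (0:ℝ) (0+1)) : ℝ)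

lemma measurable_rep : Measurable (rep d) := by
  refine (PiLp.continuous_toLp 2 _).measurable.comp ?_
  apply measurable_pi_lambda
  intro i
  exact measurable_subtype_coe.comp
    ((AddCircle.measurableEquivIco (1:ℝ) 0).measurable.comp (measurable_pi_apply i))

lemma projT_rep (y : Td d) : projT (rep d y) = y := by
  funext i
  show ((AddCircle.equivIco (1:ℝ) 0 (y i) : ℝ) : AddCircle (1:ℝ)) = y i
  exact (AddCircle.equivIco (1:ℝ) 0).symm_apply_apply (y i)

lemma exists_intVec_of_projT_eq {x y : Ed d} (h : projT x = projT y) :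
    ∃ k : Fin d → ℤ, x = y + intVec k := by
  have h' : ∀ i, ∃ n : ℤ, x i = y i + n := by
    intro i
    have hi : (x i : AddCircle (1:ℝ)) = (y i : AddCircle (1:ℝ)) := congrFun h i
    have : ((x i - y i : ℝ) : AddCircle (1:ℝ)) = 0 := by
      rw [QuotientAddGroup.mk_sub, hi, sub_self]
    rw [AddCircle.coe_eq_zero_iff] at this
    obtain ⟨n, hn⟩ := this
    exact ⟨n, by simp at hn; linarith⟩
  choose k hk using h'
  refine ⟨k, PiLp.ext fun i => ?_⟩
  simpa [intVec] using hk i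

lemma fderiv_periodic {φ : Ed d → ℝ} (hφ : Differentiable ℝ φ) (hper : ZPeriodic φ)
    (x : Ed d) (k : Fin d → ℤ) : fderiv ℝ φ (x + intVec k) = fderiv ℝ φ x := by
  have h1 : HasFDerivAt (fun y => φ (y + intVec k)) (fderiv ℝ φ (x + intVec k)) x := by
    have := (hφ (x + intVec k)).hasFDerivAt.comp x ((hasFDerivAt_id x).add_const (intVec k))
    simpa [Function.comp_def] using this
  have h2 : (fun y => φ (y + intVec k)) = φ := funext fun y => hper y k
  rw [h2] at h1
  exact h1.fderiv.symm

/-- A continuous periodic function is bounded. -/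
lemma periodic_bound {E : Type*} [NormedAddCommGroup E] {f : Ed d → E}
    (hf : Continuous f) (hper : ∀ (x : Ed d) (k : Fin d → ℤ), f (x + intVec k) = f x) :
    ∃ C : ℝ, 0 ≤ C ∧ ∀ x, ‖f x‖ ≤ C := by
  obtain ⟨C, hC⟩ := (isCompact_closedBall (0 : Ed d) (Real.sqrt d)).exists_bound_of_continuousOn
    hf.continuousOn
  refine ⟨C, le_trans (norm_nonneg (f 0)) (hC 0 (by simp [Real.sqrt_nonneg])), fun x => ?_⟩
  set k : Fin d → ℤ := fun i => -⌊x i⌋ with hk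
  have hx : f x = f (x + intVec k) := (hper x k).symm
  rw [hx]
  apply hC
  rw [Metric.mem_closedBall, dist_zero_right, EuclideanSpace.norm_eq]
  apply Real.sqrt_le_sqrt
  have : ∀ i, ‖(x + intVec k) i‖ ^ 2 ≤ 1 := by
    intro i
    have h1 : (x + intVec k) i = Int.fract (x i) := by
      rw [PiLp.add_apply]; show x i + ((k i : ℤ) : ℝ) = _
      rw [hk, Int.fract]; push_cast; ring
    rw [h1, Real.norm_eq_abs, abs_of_nonneg (Int.fract_nonneg _), sq_le_one_iff_abs_le_one,
      abs_of_nonneg (Int.fract_nonneg _)]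
    exact le_of_lt (Int.fract_lt_one _)
  calc ∑ i, ‖(x + intVec k) i‖ ^ 2 ≤ ∑ _i : Fin d, (1:ℝ) := Finset.sum_le_sum fun i _ => this i
    _ = d := by simp

end Aux

theorem stmt16' (d : ℕ) (hd : 1 ≤ d) (lam : ℝ) (hlam : 0 < lam)
    (H : Ed d → Ed d → ℝ) (hHc : Continuous fun p : Ed d × Ed d => H p.1 p.2)
    (L : Ed d → Ed d → ℝ)
    (hL : ∀ x v : Ed d, IsLUB (Set.range fun p : Ed d => rinner p v - H x p) (L x v))
    (u : Ed d → ℝ) (huc : Continuous u) (huper : ZPeriodic u)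
    (happrox : ∀ ε : ℝ, 0 < ε → ∃ uε : Ed d → ℝ, ContDiff ℝ (⊤ : ℕ∞) uε ∧
      ZPeriodic uε ∧ (∀ x : Ed d, |u x - uε x| ≤ ε) ∧
      ∀ x : Ed d, lam * u x + H x (gradient uε x) ≤ ε)
    (Lb : Td d → Ed d → ℝ) (ub : Td d → ℝ)
    (hLb : ∀ (x v : Ed d), Lb (projT x) v = L x v)
    (hub : ∀ x : Ed d, ub (projT x) = u x)
    (μ : Measure (Td d × Ed d)) (hμ : IsProbabilityMeasure μ)
    (hclosed1 : Integrable (fun p : Td d × Ed d => ‖p.2‖) μ)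
    (hclosed2 : ∀ φ : Ed d → ℝ, ContDiff ℝ 1 φ → ZPeriodic φ →
      ∀ G : Td d → (Ed d →L[ℝ] ℝ), (∀ x : Ed d, G (projT x) = fderiv ℝ φ x) →
        ∫ p, G p.1 p.2 ∂μ = 0)
    (hint : Integrable (fun p : Td d × Ed d => Lb p.1 p.2) μ) :
    0 ≤ ∫ p, (Lb p.1 p.2 - lam * ub p.1) ∂μ := by
  have key : ∀ ε : ℝ, 0 < ε → -ε ≤ ∫ p, (Lb p.1 p.2 - lam * ub p.1) ∂μ := by
    intro ε hε
    obtain ⟨uε, hsm, hperε, _, hsub⟩ := happrox ε hε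
    have hC1 : ContDiff ℝ 1 uε := hsm.of_le (by exact_mod_cast le_top)
    have hdiff : Differentiable ℝ uε := hC1.differentiable one_ne_zero
    set G : Td d → (Ed d →L[ℝ] ℝ) := fun y => fderiv ℝ uε (Aux.rep d y) with hGdef
    have hG : ∀ x : Ed d, G (projT x) = fderiv ℝ uε x := by
      intro x
      obtain ⟨k, hk⟩ := Aux.exists_intVec_of_projT_eq
        (x := Aux.rep d (projT x)) (y := x) (Aux.projT_rep _)
      show fderiv ℝ uε (Aux.rep d (projT x)) = fderiv ℝ uε x
      rw [hk, Aux.fderiv_periodic hdiff hperε]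
    have hzero : ∫ p, G p.1 p.2 ∂μ = 0 := hclosed2 uε hC1 hperε G hG
    obtain ⟨C, hC0, hC⟩ := Aux.periodic_bound (hC1.continuous_fderiv one_ne_zero)
      (fun x k => Aux.fderiv_periodic hdiff hperε x k)
    obtain ⟨Cu, _, hCu⟩ := Aux.periodic_bound huc (fun x k => huper x k)
    have hmG : Measurable fun p : Td d × Ed d => G p.1 p.2 := by
      have h1 : Measurable fun p : Td d × Ed d => (G p.1, p.2) :=
        ((hC1.continuous_fderiv one_ne_zero).measurable.comp
          (Aux.measurable_rep.comp measurable_fst)).prodMk measurable_snd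
      exact isBoundedBilinearMap_apply.continuous.measurable.comp h1
    have hIG : Integrable (fun p : Td d × Ed d => G p.1 p.2) μ := by
      refine Integrable.mono' (hclosed1.const_mul C) hmG.aestronglyMeasurable
        (ae_of_all _ fun p => ?_)
      calc ‖G p.1 p.2‖ ≤ ‖G p.1‖ * ‖p.2‖ := (G p.1).le_opNorm p.2
        _ ≤ C * ‖p.2‖ := mul_le_mul_of_nonneg_right (hC _) (norm_nonneg _)
    have hub_eq : (fun p : Td d × Ed d => ub p.1) = fun p => u (Aux.rep d p.1) := by
      funext p; rw [← hub (Aux.rep d p.1), Aux.projT_rep]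
    have hIub : Integrable (fun p : Td d × Ed d => ub p.1) μ := by
      rw [hub_eq]
      refine Integrable.mono' (integrable_const Cu)
        ((huc.measurable.comp (Aux.measurable_rep.comp measurable_fst)).aestronglyMeasurable)
        (ae_of_all _ fun p => hCu _)
    have hImain : Integrable (fun p : Td d × Ed d => Lb p.1 p.2 - lam * ub p.1) μ :=
      hint.sub (hIub.const_mul lam)
    have hpt : ∀ p : Td d × Ed d, G p.1 p.2 - ε ≤ Lb p.1 p.2 - lam * ub p.1 := by
      intro p
      have h1 : Lb p.1 p.2 = L (Aux.rep d p.1) p.2 := by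
        rw [← Aux.projT_rep p.1, hLb, Aux.projT_rep]
      have h2 : ub p.1 = u (Aux.rep d p.1) := by
        rw [← Aux.projT_rep p.1, hub, Aux.projT_rep]
      have h3 : G p.1 p.2 = rinner (gradient uε (Aux.rep d p.1)) p.2 := by
        show fderiv ℝ uε (Aux.rep d p.1) p.2 = _
        rw [rinner, gradient]
        exact (InnerProductSpace.toDual_symm_apply).symm
      have h4 : rinner (gradient uε (Aux.rep d p.1)) p.2
          - H (Aux.rep d p.1) (gradient uε (Aux.rep d p.1)) ≤ L (Aux.rep d p.1) p.2 :=
        (hL (Aux.rep d p.1) p.2).1 ⟨gradient uε (Aux.rep d p.1), rfl⟩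
      have h5 := hsub (Aux.rep d p.1)
      rw [h1, h2, h3]; linarith
    calc (-ε : ℝ) = ∫ p, (G p.1 p.2 - ε) ∂μ := by
          rw [integral_sub hIG (integrable_const ε), hzero, integral_const]
          simp [measure_univ]
      _ ≤ _ := integral_mono (hIG.sub (integrable_const ε)) hImain hpt
  by_contra hcon
  push_neg at hcon
  have := key (-(∫ p, (Lb p.1 p.2 - lam * ub p.1) ∂μ)/2) (by linarith)
  linarith


/-- If `u` admits smooth periodic approximations that are `ε`-subsolutions of the
discounted Hamilton–Jacobi equation, then `∫ (L - λu) dμ ≥ 0` for every closed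
probability measure `μ`. Here `L` is the Legendre transform of `H`. -/
theorem stmt16 (d : ℕ) (hd : 1 ≤ d) (lam : ℝ) (hlam : 0 < lam)
    (H : Ed d → Ed d → ℝ) (hHc : Continuous fun p : Ed d × Ed d => H p.1 p.2)
    (hHper : ZPeriodic1 H)
    (L : Ed d → Ed d → ℝ)
    (hL : ∀ x v : Ed d, IsLUB (Set.range fun p : Ed d => rinner p v - H x p) (L x v))
    (u : Ed d → ℝ) (huc : Continuous u) (huper : ZPeriodic u)
    (happrox : ∀ ε : ℝ, 0 < ε → ∃ uε : Ed d → ℝ, ContDiff ℝ (⊤ : ℕ∞) uε ∧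
      ZPeriodic uε ∧ (∀ x : Ed d, |u x - uε x| ≤ ε) ∧
      ∀ x : Ed d, lam * u x + H x (gradient uε x) ≤ ε)
    (Lb : Td d → Ed d → ℝ) (ub : Td d → ℝ)
    (hLb : ∀ (x v : Ed d), Lb (projT x) v = L x v)
    (hub : ∀ x : Ed d, ub (projT x) = u x)
    (μ : Measure (Td d × Ed d)) (hμ : IsProbabilityMeasure μ)
    (hclosed : ClosedMeasure μ)
    (hint : Integrable (fun p : Td d × Ed d => Lb p.1 p.2) μ) :
    0 ≤ ∫ p, (Lb p.1 p.2 - lam * ub p.1) ∂μ :=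
  stmt16' d hd lam hlam H hHc L hL u huc huper happrox Lb ub hLb hub μ hμ
    hclosed.1 hclosed.2 hint
end
end

section
/- Let d ≥ 1, let L : ℝ^d × ℝ^d → ℝ be C², ℤ^d-periodic in its first variable, with ∂²L/∂v²(x,v) positive definite for every (x,v), and let F∞, D > 0. Then there exists a constant C > 0 such that for all τ ∈ (0,1), λ ∈ (0,1], every C¹ ℤ^d-periodic f : ℝ^d → ℝ with ‖f‖∞ ≤ F∞ and ‖Df‖∞ ≤ F∞, and all points x₋₁, x₀, x₁ ∈ ℝ^d with |x₀ − x₋₁| ≤ τD, |x₁ − x₀| ≤ τD such that x₀ minimizes the function z ↦ (1−τλ) 𝓛_{τ,f}(x₋₁, z) + 𝓛_{τ,f}(z, x₁) over ℝ^d, the discrete velocities v₋₁ := (x₀ − x₋₁)/τ and v₀ := (x₁ − x₀)/τ satisfy |v₀ − v₋₁| ≤ C τ. -/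
open MeasureTheory Set Filter

noncomputable section

lemma norm_reduce {d : ℕ} (x : Ed d) : ∃ k : Fin d → ℤ, ‖x + intVec k‖ ≤ Real.sqrt d := by
  refine ⟨fun i => -⌊x i⌋, ?_⟩
  rw [EuclideanSpace.norm_eq]
  apply Real.sqrt_le_sqrt
  have h1 : ∀ i : Fin d, ‖(x + intVec (fun i => -⌊x i⌋)) i‖ ^ 2 ≤ 1 := by
    intro i
    have hx : (x + intVec (fun i => -⌊x i⌋)) i = Int.fract (x i) := by
      rw [PiLp.add_apply]
      show x i + ((-⌊x i⌋ : ℤ) : ℝ) = _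
      push_cast
      rw [Int.fract]; ring
    rw [hx, Real.norm_eq_abs, abs_of_nonneg (Int.fract_nonneg _)]
    nlinarith [Int.fract_nonneg (x i), Int.fract_lt_one (x i)]
  calc ∑ i, ‖(x + intVec (fun i => -⌊x i⌋)) i‖ ^ 2 ≤ ∑ _i : Fin d, (1:ℝ) :=
        Finset.sum_le_sum (fun i _ => h1 i)
    _ = d := by simp

set_option maxHeartbeats 1000000 in
/-- Discrete velocity increment bound along interior minimizers of two
consecutive discrete actions: `|v₀ - v₋₁| ≤ Cτ`. -/
theorem stmt17 (d : ℕ) (hd : 1 ≤ d)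
    (L : Ed d → Ed d → ℝ) (hL2 : ContDiff ℝ 2 fun p : Ed d × Ed d => L p.1 p.2)
    (hLper : ZPeriodic1 L)
    (hLconv : ∀ (x v h : Ed d), h ≠ 0 →
      0 < (iteratedFDeriv ℝ 2 (fun w => L x w) v) ![h, h])
    (Finf D : ℝ) (hFinf : 0 < Finf) (hD : 0 < D) :
    ∃ C : ℝ, 0 < C ∧
      ∀ τ lam : ℝ, τ ∈ Set.Ioo (0:ℝ) 1 → lam ∈ Set.Ioc (0:ℝ) 1 →
        ∀ f : Ed d → ℝ, ContDiff ℝ 1 f → ZPeriodic f →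
          (∀ x, |f x| ≤ Finf) → (∀ x : Ed d, ‖fderiv ℝ f x‖ ≤ Finf) →
          ∀ xm1 x0 x1 : Ed d, ‖x0 - xm1‖ ≤ τ * D → ‖x1 - x0‖ ≤ τ * D →
            (∀ z : Ed d,
              (1 - τ * lam) * dAct L f τ xm1 x0 + dAct L f τ x0 x1 ≤
                (1 - τ * lam) * dAct L f τ xm1 z + dAct L f τ z x1) →
            ‖τ⁻¹ • (x1 - x0) - τ⁻¹ • (x0 - xm1)‖ ≤ C * τ := by
  classical
  set Φ : Ed d × Ed d → ℝ := fun p => L p.1 p.2 with hΦdef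
  set Ψ := fderiv ℝ Φ with hΨdef
  have hΨc1 : ContDiff ℝ 1 Ψ := hL2.fderiv_right (by norm_num)
  have hΦat : ∀ p, HasFDerivAt Φ (Ψ p) p := fun p =>
    ((hL2.differentiable (by norm_num)) p).hasFDerivAt
  have hΨat : ∀ p, HasFDerivAt Ψ (fderiv ℝ Ψ p) p := fun p =>
    ((hΨc1.differentiable (by norm_num)) p).hasFDerivAt
  have hΨcont : Continuous Ψ := hΨc1.continuous
  have hΨ'cont : Continuous (fderiv ℝ Ψ) := hΨc1.continuous_fderiv (by norm_num)
  -- inclusion of the second factor, and induced map on partial derivatives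
  set J : Ed d →L[ℝ] Ed d × Ed d :=
    (0 : Ed d →L[ℝ] Ed d).prod (ContinuousLinearMap.id ℝ (Ed d)) with hJdef
  set P : ((Ed d × Ed d) →L[ℝ] ℝ) →L[ℝ] (Ed d →L[ℝ] ℝ) :=
    (ContinuousLinearMap.compL ℝ (Ed d) (Ed d × Ed d) ℝ).flip J with hPdef
  have hP : ∀ (g : (Ed d × Ed d) →L[ℝ] ℝ) (w : Ed d), P g w = g (0, w) := fun g w => rfl
  -- partial derivatives in the velocity variable
  have hFd1 : ∀ x v : Ed d, HasFDerivAt (L x) (P (Ψ (x, v))) v := by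
    intro x v
    have h := (hΦat (x, v)).comp v ((hasFDerivAt_const x v).prodMk (hasFDerivAt_id v))
    exact h
  have hfderivLx : ∀ x : Ed d, fderiv ℝ (L x) = fun v => P (Ψ (x, v)) :=
    fun x => funext fun v => (hFd1 x v).fderiv
  have hFd2 : ∀ x v : Ed d, HasFDerivAt (fun z => P (Ψ (x, z)))
      (P.comp ((fderiv ℝ Ψ (x, v)).comp J)) v := by
    intro x v
    have h := (P.hasFDerivAt.comp _ (hΨat (x,v))).comp v
      ((hasFDerivAt_const x v).prodMk (hasFDerivAt_id v))
    exact h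
  have hsecond : ∀ x v w : Ed d,
      iteratedFDeriv ℝ 2 (fun z => L x z) v ![w, w] = fderiv ℝ Ψ (x, v) (0, w) (0, w) := by
    intro x v w
    rw [iteratedFDeriv_two_apply]
    have h1 : fderiv ℝ (fderiv ℝ (L x)) v = P.comp ((fderiv ℝ Ψ (x, v)).comp J) := by
      rw [hfderivLx x]
      exact (hFd2 x v).fderiv
    show fderiv ℝ (fderiv ℝ (L x)) v w w = _
    rw [h1]
    rfl
  -- periodicity of Ψ in the position variable
  have hΨtrans : ∀ (p : Ed d × Ed d) (k : Fin d → ℤ), Ψ (p.1 + intVec k, p.2) = Ψ p := by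
    intro p k
    have hfun : (fun q : Ed d × Ed d => Φ (q + (intVec k, 0))) = Φ :=
      funext fun q => by
        show L (q.1 + intVec k) (q.2 + 0) = L q.1 q.2
        rw [add_zero]; exact hLper _ _ k
    have h1 : HasFDerivAt (fun q => Φ (q + (intVec k, 0))) (Ψ (p + (intVec k, 0))) p := by
      have h := (hΦat (p + (intVec k, 0))).comp p ((hasFDerivAt_id p).add_const (intVec k, 0))
      simpa [Function.comp_def] using h
    have h2 : HasFDerivAt Φ (Ψ (p + (intVec k, 0))) p := hfun ▸ h1
    have h3 := h2.fderiv
    have hpt : (p.1 + intVec k, p.2) = p + (intVec k, (0 : Ed d)) := by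
      simp [Prod.ext_iff]
    rw [hpt]
    exact h3.symm
  -- constants from compactness
  set Rd : ℝ := Real.sqrt d with hRddef
  have hRd : 0 ≤ Rd := Real.sqrt_nonneg _
  set R : ℝ := Rd + D + 1 with hRdef
  set B : Set (Ed d × Ed d) := Metric.closedBall 0 R with hBdef
  have hBc : IsCompact B := isCompact_closedBall _ _
  have hmemB : ∀ (a b : Ed d), ‖a‖ ≤ Rd + D → ‖b‖ ≤ D → (a, b) ∈ B := by
    intro a b ha hb
    rw [hBdef, Metric.mem_closedBall, dist_zero_right, Prod.norm_def]
    exact max_le (by simp only; linarith) (by simp only; linarith)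
  obtain ⟨M₁, hM₁⟩ := hBc.exists_bound_of_continuousOn hΨcont.continuousOn
  obtain ⟨M₂, hM₂⟩ := hBc.exists_bound_of_continuousOn (f := fderiv ℝ Ψ) hΨ'cont.continuousOn
  set M1 : ℝ := max M₁ 0 with hM1def
  set M2 : ℝ := max M₂ 0 with hM2def
  have hM1nn : 0 ≤ M1 := le_max_right _ _
  have hM2nn : 0 ≤ M2 := le_max_right _ _
  have hLip : ∀ p ∈ B, ∀ q ∈ B, ‖Ψ q - Ψ p‖ ≤ M2 * ‖q - p‖ := by
    intro p hp q hq
    exact (convex_closedBall _ _).norm_image_sub_le_of_norm_fderiv_le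
      (fun z _ => (hΨc1.differentiable (by norm_num)) z)
      (fun z hz => (hM₂ z hz).trans (le_max_left _ _)) hp hq
  -- the ellipticity constant
  obtain ⟨e1, he1⟩ : ∃ e : Ed d, ‖e‖ = 1 :=
    ⟨EuclideanSpace.single ⟨0, hd⟩ (1:ℝ), by simp⟩
  set S : Set ((Ed d × Ed d) × Ed d) := B ×ˢ Metric.sphere (0 : Ed d) 1 with hSdef
  have hSc : IsCompact S := hBc.prod (isCompact_sphere _ _)
  have hSne : S.Nonempty := by
    refine ⟨((0, 0), e1), ?_, ?_⟩
    · rw [hBdef]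
      refine Metric.mem_closedBall_self ?_
      linarith
    · simp [he1]
  set G : ((Ed d × Ed d) × Ed d) → ℝ := fun q => fderiv ℝ Ψ q.1 (0, q.2) (0, q.2) with hGdef
  have hGcont : Continuous G :=
    ((hΨ'cont.comp continuous_fst).clm_apply
      (continuous_const.prodMk continuous_snd)).clm_apply
      (continuous_const.prodMk continuous_snd)
  obtain ⟨q₀, hq₀S, hq₀min⟩ := hSc.exists_isMinOn hSne hGcont.continuousOn
  set m : ℝ := G q₀ with hmdef
  have hm : 0 < m := by
    obtain ⟨hq1, hq2⟩ := hq₀S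
    have hne : q₀.2 ≠ 0 := by
      intro h
      rw [mem_sphere_zero_iff_norm, h, norm_zero] at hq2
      norm_num at hq2
    have h := hLconv q₀.1.1 q₀.1.2 q₀.2 hne
    rwa [hsecond] at h
  have hq₀le : ∀ q ∈ S, m ≤ G q := fun q hq => hmdef ▸ hq₀min hq
  clear_value m M1 M2
  have hGlb : ∀ p : Ed d × Ed d, p ∈ B → ∀ w : Ed d,
      m * ‖w‖^2 ≤ fderiv ℝ Ψ p (0, w) (0, w) := by
    intro p hp w
    rcases eq_or_ne w 0 with rfl | hw
    · have h0 : fderiv ℝ Ψ p ((0:Ed d), (0:Ed d)) = 0 := by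
        rw [show ((0:Ed d), (0:Ed d)) = (0 : Ed d × Ed d) from rfl, map_zero]
      rw [norm_zero, h0, ContinuousLinearMap.zero_apply]
      norm_num
    · have hnw : (0:ℝ) < ‖w‖ := norm_pos_iff.2 hw
      set h : Ed d := ‖w‖⁻¹ • w with hhdef
      have hh : ‖h‖ = 1 := by
        rw [hhdef, norm_smul, Real.norm_eq_abs, abs_of_nonneg (inv_nonneg.2 hnw.le),
          inv_mul_cancel₀ hnw.ne']
      have hmem : (p, h) ∈ S := ⟨hp, by simpa [mem_sphere_zero_iff_norm] using hh⟩
      have h1 : m ≤ G (p, h) := hq₀le _ hmem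
      have hsm : ((0:Ed d), w) = ‖w‖ • ((0:Ed d), h) := by
        rw [Prod.smul_mk, smul_zero, hhdef, smul_smul, mul_inv_cancel₀ hnw.ne', one_smul]
      have h2 : fderiv ℝ Ψ p (0, w) (0, w) = ‖w‖^2 * G (p, h) := by
        have hGph : G (p, h) = fderiv ℝ Ψ p (0, h) (0, h) := rfl
        rw [hGph, hsm]
        simp only [_root_.map_smul, ContinuousLinearMap.smul_apply, smul_eq_mul]
        ring
      rw [h2]
      calc m * ‖w‖^2 = ‖w‖^2 * m := by ring
        _ ≤ ‖w‖^2 * G (p, h) := mul_le_mul_of_nonneg_left h1 (sq_nonneg _)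
  -- the constant
  have hCpos : 0 < (M2*D + 2*M1 + Finf)/m :=
    div_pos (by have := mul_nonneg hM2nn hD.le; linarith) hm
  refine ⟨(M2*D + 2*M1 + Finf)/m, hCpos, ?_⟩
  intro τ lam hτ hlam f hf hfper hfb hfdb xm1 x0 x1 hx0 hx1 hmin
  obtain ⟨hτ0, hτ1⟩ := hτ
  have hτne : τ ≠ 0 := ne_of_gt hτ0
  have htl0 : 0 ≤ τ * lam := mul_nonneg hτ0.le hlam.1.le
  have htlt : τ * lam ≤ τ := mul_le_of_le_one_right hτ0.le hlam.2
  have hRdD : Real.sqrt d ≤ Rd + D := by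
    rw [hRddef]
    exact le_add_of_nonneg_right hD.le
  set vm1 : Ed d := τ⁻¹ • (x0 - xm1) with hvm1def
  set v0 : Ed d := τ⁻¹ • (x1 - x0) with hv0def
  set w : Ed d := v0 - vm1 with hwdef
  have hvm1 : ‖vm1‖ ≤ D := by
    rw [hvm1def, norm_smul, Real.norm_eq_abs, abs_of_nonneg (inv_nonneg.2 hτ0.le)]
    calc τ⁻¹ * ‖x0 - xm1‖ ≤ τ⁻¹ * (τ * D) := by
          apply mul_le_mul_of_nonneg_left hx0 (inv_nonneg.2 hτ0.le)
      _ = D := by field_simp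
  have hv0 : ‖v0‖ ≤ D := by
    rw [hv0def, norm_smul, Real.norm_eq_abs, abs_of_nonneg (inv_nonneg.2 hτ0.le)]
    calc τ⁻¹ * ‖x1 - x0‖ ≤ τ⁻¹ * (τ * D) := by
          apply mul_le_mul_of_nonneg_left hx1 (inv_nonneg.2 hτ0.le)
      _ = D := by field_simp
  -- reduce x0 into the fundamental domain
  obtain ⟨k, hk⟩ := norm_reduce x0
  set x0' : Ed d := x0 + intVec k with hx0'def
  set xm1' : Ed d := xm1 + intVec k with hxm1'def
  have hxm1' : ‖xm1'‖ ≤ Rd + D := by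
    have he : xm1' = x0' + (xm1 - x0) := by rw [hxm1'def, hx0'def]; abel
    rw [he]
    calc ‖x0' + (xm1 - x0)‖ ≤ ‖x0'‖ + ‖xm1 - x0‖ := norm_add_le _ _
      _ ≤ Rd + τ * D := by
          rw [norm_sub_rev]
          exact add_le_add hk hx0
      _ ≤ Rd + D := add_le_add_right (mul_le_of_le_one_left hD.le hτ1.le) Rd
  have hΨx0 : ∀ v : Ed d, Ψ (x0, v) = Ψ (x0', v) := fun v => (hΨtrans (x0, v) k).symm
  have hΨxm1 : ∀ v : Ed d, Ψ (xm1, v) = Ψ (xm1', v) := fun v => (hΨtrans (xm1, v) k).symm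
  -- memberships
  have hmem_x0vm1 : (x0', vm1) ∈ B := hmemB _ _ (hk.trans hRdD) hvm1
  have hmem_x0v0 : (x0', v0) ∈ B := hmemB _ _ (hk.trans hRdD) hv0
  have hmem_xm1vm1 : (xm1', vm1) ∈ B := hmemB _ _ hxm1' hvm1
  have hzw : ‖((0:Ed d), w)‖ = ‖w‖ := by
    rw [Prod.norm_def]
    simp only [norm_zero]
    exact max_eq_right (norm_nonneg w)
  have hwz : ‖(w, (0:Ed d))‖ = ‖w‖ := by
    rw [Prod.norm_def]
    simp only [norm_zero]
    exact max_eq_left (norm_nonneg w)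
  -- Euler–Lagrange equation at the interior minimizer
  set A : Ed d →L[ℝ] ℝ := (1 - τ*lam) • (τ • ((Ψ (xm1, vm1)).comp
      ((0 : Ed d →L[ℝ] Ed d).prod (τ⁻¹ • ContinuousLinearMap.id ℝ (Ed d))))) with hAdef
  set Bd : Ed d →L[ℝ] ℝ := τ • ((Ψ (x0, v0)).comp
      ((ContinuousLinearMap.id ℝ (Ed d)).prod
        (τ⁻¹ • ((0 : Ed d →L[ℝ] Ed d) - ContinuousLinearMap.id ℝ (Ed d))))
      + fderiv ℝ f x0) with hBddef
  have hA : HasFDerivAt (fun z : Ed d => (1 - τ*lam) * dAct L f τ xm1 z) A x0 := by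
    have hu1 : HasFDerivAt (fun z : Ed d => ((xm1 : Ed d), τ⁻¹ • (z - xm1)))
        ((0 : Ed d →L[ℝ] Ed d).prod (τ⁻¹ • ContinuousLinearMap.id ℝ (Ed d))) x0 :=
      (hasFDerivAt_const xm1 x0).prodMk (((hasFDerivAt_id x0).sub_const xm1).const_smul τ⁻¹)
    have h2 : HasFDerivAt (fun z : Ed d => Φ (xm1, τ⁻¹ • (z - xm1)))
        ((Ψ (xm1, vm1)).comp ((0 : Ed d →L[ℝ] Ed d).prod
          (τ⁻¹ • ContinuousLinearMap.id ℝ (Ed d)))) x0 :=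
      by have h := (hΦat (xm1, vm1)).comp x0 hu1; exact h
    exact ((h2.add_const (f xm1)).const_mul τ).const_mul (1 - τ*lam)
  have hB : HasFDerivAt (fun z : Ed d => dAct L f τ z x1) Bd x0 := by
    have hu2 : HasFDerivAt (fun z : Ed d => (z, τ⁻¹ • (x1 - z)))
        ((ContinuousLinearMap.id ℝ (Ed d)).prod
          (τ⁻¹ • ((0 : Ed d →L[ℝ] Ed d) - ContinuousLinearMap.id ℝ (Ed d)))) x0 :=
      (hasFDerivAt_id x0).prodMk (((hasFDerivAt_const x1 x0).sub (hasFDerivAt_id x0)).const_smul τ⁻¹)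
    have h2 : HasFDerivAt (fun z : Ed d => Φ (z, τ⁻¹ • (x1 - z)))
        ((Ψ (x0, v0)).comp ((ContinuousLinearMap.id ℝ (Ed d)).prod
          (τ⁻¹ • ((0 : Ed d →L[ℝ] Ed d) - ContinuousLinearMap.id ℝ (Ed d))))) x0 :=
      by have h := (hΦat (x0, v0)).comp x0 hu2; exact h
    have hfd : HasFDerivAt f (fderiv ℝ f x0) x0 := ((hf.differentiable (by norm_num)) x0).hasFDerivAt
    exact (h2.add hfd).const_mul τ
  have hloc : IsLocalMin (fun z : Ed d =>
      (1 - τ*lam) * dAct L f τ xm1 z + dAct L f τ z x1) x0 :=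
    Filter.Eventually.of_forall hmin
  have hEL : A + Bd = 0 := hloc.hasFDerivAt_eq_zero (hA.add hB)
  clear_value vm1 v0 w x0' xm1' A Bd
  have hELh : ∀ h : Ed d, Ψ (x0, v0) (0, h) - Ψ (x0, vm1) (0, h)
      = (Ψ (xm1, vm1) (0, h) - Ψ (x0, vm1) (0, h)) - (τ*lam) * Ψ (xm1, vm1) (0, h)
        + τ * Ψ (x0, v0) (h, 0) + τ * fderiv ℝ f x0 h := by
    intro h
    have h0 : A h + Bd h = 0 := by
      rw [← ContinuousLinearMap.add_apply, hEL]; rfl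
    rw [hAdef, hBddef] at h0
    simp only [ContinuousLinearMap.smul_apply, ContinuousLinearMap.comp_apply,
      ContinuousLinearMap.prod_apply, ContinuousLinearMap.add_apply,
      ContinuousLinearMap.zero_apply, ContinuousLinearMap.coe_id', id_eq,
      ContinuousLinearMap.sub_apply, ContinuousLinearMap.id_apply,
      smul_eq_mul] at h0
    have e1 : Ψ (xm1, vm1) ((0 : Ed d), τ⁻¹ • h) = τ⁻¹ * Ψ (xm1, vm1) (0, h) := by
      rw [show ((0 : Ed d), τ⁻¹ • h) = τ⁻¹ • ((0 : Ed d), h) by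
        rw [Prod.smul_mk, smul_zero], ContinuousLinearMap.map_smul, smul_eq_mul]
    have e2 : Ψ (x0, v0) (h, τ⁻¹ • ((0:Ed d) - h))
        = Ψ (x0, v0) (h, (0:Ed d)) - τ⁻¹ * Ψ (x0, v0) (0, h) := by
      rw [show (h, τ⁻¹ • ((0:Ed d) - h)) = (h, (0:Ed d)) - τ⁻¹ • ((0 : Ed d), h) by
        simp [Prod.ext_iff, smul_sub], map_sub, ContinuousLinearMap.map_smul, smul_eq_mul]
    rw [e1, e2] at h0
    have ht : τ * τ⁻¹ = 1 := mul_inv_cancel₀ hτne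
    linear_combination (-1 : ℝ) * h0
      + ((1 - τ*lam) * Ψ (xm1, vm1) ((0:Ed d), h) - Ψ (x0, v0) ((0:Ed d), h)) * ht
  have hELw : Ψ (x0', v0) (0, w) - Ψ (x0', vm1) (0, w)
      = (Ψ (xm1', vm1) (0, w) - Ψ (x0', vm1) (0, w)) - (τ*lam) * Ψ (xm1', vm1) (0, w)
        + τ * Ψ (x0', v0) (w, 0) + τ * fderiv ℝ f x0 w := by
    have h := hELh w
    rwa [hΨx0 v0, hΨx0 vm1, hΨxm1 vm1] at h
  -- upper bound
  have hup : Ψ (x0', v0) (0, w) - Ψ (x0', vm1) (0, w)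
      ≤ τ * ((M2*D + 2*M1 + Finf) * ‖w‖) := by
    rw [hELw]
    have a1 : Ψ (xm1', vm1) (0, w) - Ψ (x0', vm1) (0, w) ≤ M2 * (τ*D) * ‖w‖ := by
      have hd1 : Ψ (xm1', vm1) (0, w) - Ψ (x0', vm1) (0, w)
          = (Ψ (xm1', vm1) - Ψ (x0', vm1)) ((0:Ed d), w) := by
        rw [ContinuousLinearMap.sub_apply]
      rw [hd1]
      have hdn : ‖Ψ (xm1', vm1) - Ψ (x0', vm1)‖ ≤ M2 * (τ*D) := by
        have hl := hLip (x0', vm1) hmem_x0vm1 (xm1', vm1) hmem_xm1vm1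
        have hnm : ‖((xm1', vm1) : Ed d × Ed d) - (x0', vm1)‖ = ‖xm1 - x0‖ := by
          have : ((xm1', vm1) : Ed d × Ed d) - (x0', vm1) = (xm1 - x0, 0) := by
            rw [Prod.mk_sub_mk, sub_self, hxm1'def, hx0'def]
            congr 1
            abel
          rw [this, Prod.norm_def]
          simp only [norm_zero]
          exact max_eq_left (norm_nonneg _)
        rw [hnm] at hl
        refine hl.trans ?_
        rw [norm_sub_rev]
        exact mul_le_mul_of_nonneg_left hx0 hM2nn
      calc (Ψ (xm1', vm1) - Ψ (x0', vm1)) ((0:Ed d), w)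
          ≤ ‖(Ψ (xm1', vm1) - Ψ (x0', vm1)) ((0:Ed d), w)‖ := le_abs_self _
        _ ≤ ‖Ψ (xm1', vm1) - Ψ (x0', vm1)‖ * ‖((0:Ed d), w)‖ :=
            ContinuousLinearMap.le_opNorm _ _
        _ = ‖Ψ (xm1', vm1) - Ψ (x0', vm1)‖ * ‖w‖ := by rw [hzw]
        _ ≤ M2 * (τ*D) * ‖w‖ := mul_le_mul_of_nonneg_right hdn (norm_nonneg _)
    have habs : ∀ (p : Ed d × Ed d), p ∈ B → ∀ q : Ed d × Ed d, |Ψ p q| ≤ M1 * ‖q‖ := by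
      intro p hp q
      calc |Ψ p q| = ‖Ψ p q‖ := (Real.norm_eq_abs _).symm
        _ ≤ ‖Ψ p‖ * ‖q‖ := ContinuousLinearMap.le_opNorm _ _
        _ ≤ M1 * ‖q‖ := mul_le_mul_of_nonneg_right
            ((hM₁ p hp).trans (by rw [hM1def]; exact le_max_left _ _)) (norm_nonneg _)
    have a2 : -((τ*lam) * Ψ (xm1', vm1) (0, w)) ≤ τ * (M1 * ‖w‖) := by
      have h1 : -(Ψ (xm1', vm1) ((0:Ed d), w)) ≤ M1 * ‖w‖ := by
        have := habs _ hmem_xm1vm1 ((0:Ed d), w)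
        rw [hzw] at this
        exact (neg_le_abs _).trans this
      calc -((τ*lam) * Ψ (xm1', vm1) (0, w)) = (τ*lam) * (-(Ψ (xm1', vm1) (0, w))) := by ring
        _ ≤ (τ*lam) * (M1 * ‖w‖) := mul_le_mul_of_nonneg_left h1 htl0
        _ ≤ τ * (M1 * ‖w‖) := mul_le_mul_of_nonneg_right htlt
            (mul_nonneg hM1nn (norm_nonneg _))
    have a3 : τ * Ψ (x0', v0) (w, 0) ≤ τ * (M1 * ‖w‖) := by
      apply mul_le_mul_of_nonneg_left _ hτ0.le
      have := habs _ hmem_x0v0 ((w, (0:Ed d)))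
      rw [hwz] at this
      exact (le_abs_self _).trans this
    have a4 : τ * fderiv ℝ f x0 w ≤ τ * (Finf * ‖w‖) := by
      apply mul_le_mul_of_nonneg_left _ hτ0.le
      calc fderiv ℝ f x0 w ≤ ‖fderiv ℝ f x0 w‖ := le_abs_self _
        _ ≤ ‖fderiv ℝ f x0‖ * ‖w‖ := ContinuousLinearMap.le_opNorm _ _
        _ ≤ Finf * ‖w‖ := mul_le_mul_of_nonneg_right (hfdb x0) (norm_nonneg _)
    have a1' : Ψ (xm1', vm1) (0, w) - Ψ (x0', vm1) (0, w) ≤ τ * (M2 * D * ‖w‖) := by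
      calc Ψ (xm1', vm1) (0, w) - Ψ (x0', vm1) (0, w) ≤ M2 * (τ*D) * ‖w‖ := a1
        _ = τ * (M2 * D * ‖w‖) := by ring
    calc (Ψ (xm1', vm1) (0, w) - Ψ (x0', vm1) (0, w)) - (τ*lam) * Ψ (xm1', vm1) (0, w)
        + τ * Ψ (x0', v0) (w, 0) + τ * fderiv ℝ f x0 w
        = ((Ψ (xm1', vm1) (0, w) - Ψ (x0', vm1) (0, w))
            + -((τ*lam) * Ψ (xm1', vm1) (0, w)))
          + τ * Ψ (x0', v0) (w, 0) + τ * fderiv ℝ f x0 w := by ring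
      _ ≤ ((τ * (M2 * D * ‖w‖)) + τ * (M1 * ‖w‖)) + τ * (M1 * ‖w‖) + τ * (Finf * ‖w‖) :=
          add_le_add (add_le_add (add_le_add a1' a2) a3) a4
      _ = τ * ((M2*D + 2*M1 + Finf) * ‖w‖) := by ring
  -- lower bound via the mean value theorem and ellipticity
  have hlow : m * ‖w‖^2 ≤ Ψ (x0', v0) (0, w) - Ψ (x0', vm1) (0, w) := by
    set φ : ℝ → ℝ := fun t => P (Ψ (x0', vm1 + t • w)) w with hφdef
    have hder : ∀ t : ℝ, HasDerivAt φ (fderiv ℝ Ψ (x0', vm1 + t • w) (0, w) (0, w)) t := by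
      intro t
      have hc : HasDerivAt (fun t : ℝ => vm1 + t • w) w t := by
        simpa using ((hasDerivAt_id t).smul_const w).const_add vm1
      have h1 := (hFd2 x0' (vm1 + t • w)).comp_hasDerivAt t hc
      have h2 := ((ContinuousLinearMap.apply ℝ ℝ w).hasFDerivAt).comp_hasDerivAt t h1
      exact h2
    have hcont : ContinuousOn φ (Icc 0 1) := fun t _ =>
      (hder t).continuousAt.continuousWithinAt
    obtain ⟨c, hc01, hcval⟩ := exists_hasDerivAt_eq_slope φ
      (fun t => fderiv ℝ Ψ (x0', vm1 + t • w) (0, w) (0, w)) one_pos hcont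
      (fun t _ => hder t)
    have hφ1 : φ 1 = Ψ (x0', v0) ((0:Ed d), w) := by
      show P (Ψ (x0', vm1 + (1:ℝ) • w)) w = _
      rw [one_smul, show vm1 + w = v0 from by rw [hwdef]; abel]
      exact hP _ _
    have hφ0 : φ 0 = Ψ (x0', vm1) ((0:Ed d), w) := by
      show P (Ψ (x0', vm1 + (0:ℝ) • w)) w = _
      rw [zero_smul, add_zero]
      exact hP _ _
    have hvc : ‖vm1 + c • w‖ ≤ D := by
      have he : vm1 + c • w = (1-c) • vm1 + c • v0 := by
        rw [hwdef]; module
      rw [he]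
      calc ‖(1-c) • vm1 + c • v0‖ ≤ ‖(1-c) • vm1‖ + ‖c • v0‖ := norm_add_le _ _
        _ = (1-c) * ‖vm1‖ + c * ‖v0‖ := by
            rw [norm_smul, norm_smul, Real.norm_eq_abs, Real.norm_eq_abs,
              abs_of_nonneg (sub_nonneg.2 hc01.2.le),
              abs_of_nonneg hc01.1.le]
        _ ≤ (1-c) * D + c * D := add_le_add
            (mul_le_mul_of_nonneg_left hvm1 (sub_nonneg.2 hc01.2.le))
            (mul_le_mul_of_nonneg_left hv0 hc01.1.le)
        _ = D := by ring
    have hmemc : (x0', vm1 + c • w) ∈ B := hmemB _ _ (hk.trans hRdD) hvc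
    have hg := hGlb _ hmemc w
    rw [hcval] at hg
    rw [hφ1, hφ0] at hg
    simpa using hg
  -- conclusion
  show ‖w‖ ≤ (M2*D + 2*M1 + Finf)/m * τ
  by_cases hw0 : w = 0
  · rw [hw0, norm_zero]
    exact le_of_lt (mul_pos hCpos hτ0)
  · have hwpos : (0:ℝ) < ‖w‖ := norm_pos_iff.2 hw0
    have key : m * ‖w‖^2 ≤ τ * ((M2*D + 2*M1 + Finf) * ‖w‖) := le_trans hlow hup
    have key2 : (m * ‖w‖) * ‖w‖ ≤ ((M2*D + 2*M1 + Finf) * τ) * ‖w‖ := by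
      have e1 : (m * ‖w‖) * ‖w‖ = m * ‖w‖^2 := by ring
      have e2 : ((M2*D + 2*M1 + Finf) * τ) * ‖w‖ = τ * ((M2*D + 2*M1 + Finf) * ‖w‖) := by ring
      rw [e1, e2]; exact key
    have key3 : m * ‖w‖ ≤ (M2*D + 2*M1 + Finf) * τ := le_of_mul_le_mul_right key2 hwpos
    rw [div_mul_eq_mul_div, le_div_iff₀ hm]
    calc ‖w‖ * m = m * ‖w‖ := by ring
      _ ≤ (M2*D + 2*M1 + Finf) * τ := key3
end
end

section
/- Let d ≥ 1. Let H : ℝ^d × ℝ^d → ℝ be ℤ^d-periodic in its first variable such that for each x the map p ↦ H(x,p) is convex and differentiable, and define L(x,v) := sup_{p ∈ ℝ^d} ( ⟨p,v⟩ − H(x,p) ), assumed finite for all (x,v). Let u : ℝ^d → ℝ be ℤ^d-periodic, and let μ be a closed Borel probability measure on 𝕋^d × ℝ^d such that for μ-almost every (x,v): u is differentiable at x (the gradient Du(x) being well defined by periodicity) and the Fenchel equality L(x,v) + H(x, Du(x)) = ⟨Du(x), v⟩ holds. Then for every ℤ^d-periodic C¹ function φ : ℝ^d → ℝ one has ∫_{𝕋^d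 × ℝ^d} ⟨ Dφ(x), ∂H/∂p (x, Du(x)) ⟩ dμ(x,v) = 0; that is, the projection of μ onto 𝕋^d solves the continuity equation div( m ∂H/∂p(x, Du) ) = 0 in the sense of distributions. -/
open MeasureTheory Set Filter

noncomputable section

section Aux

variable {d : ℕ}

lemma projT_surjective : Function.Surjective (projT (d := d)) := by
  intro t
  choose x hx using fun i => Quotient.exists_rep (t i)
  exact ⟨(WithLp.toLp 2 (fun i => x i) : EuclideanSpace ℝ (Fin d)), funext fun i => hx i⟩

lemma projT_eq_iff {x y : Ed d} (h : projT x = projT y) :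
    ∃ k : Fin d → ℤ, y = x + intVec k := by
  have h' : ∀ i, ∃ k : ℤ, y i - x i = (k : ℝ) := by
    intro i
    have hxy := congrFun h i
    simp only [projT] at hxy
    rw [QuotientAddGroup.eq_iff_sub_mem] at hxy
    obtain ⟨m, hm⟩ := (AddSubgroup.mem_zmultiples_iff).mp hxy
    refine ⟨-m, ?_⟩
    have : (m : ℝ) = x i - y i := by simpa using hm
    push_cast
    linarith
  choose k hk using h'
  refine ⟨k, ?_⟩
  ext i
  simp only [intVec, PiLp.add_apply, WithLp.ofLp_toLp]
  linarith [hk i]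

lemma fderiv_periodic {φ : Ed d → ℝ} (hφ : ContDiff ℝ 1 φ) (hper : ZPeriodic φ)
    {x y : Ed d} (h : projT x = projT y) : fderiv ℝ φ x = fderiv ℝ φ y := by
  obtain ⟨k, rfl⟩ := projT_eq_iff h
  have hd : ∀ z : Ed d, DifferentiableAt ℝ φ z := fun z => (hφ.differentiable one_ne_zero) z
  have h1 : HasFDerivAt (fun z : Ed d => φ (z + intVec k)) (fderiv ℝ φ (x + intVec k)) x :=
    ((hd (x + intVec k)).hasFDerivAt).comp x ((hasFDerivAt_id x).add_const (intVec k))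
  have h2 : (fun z : Ed d => φ (z + intVec k)) = φ := funext fun z => hper z k
  rw [h2] at h1
  exact (hd x).hasFDerivAt.unique h1

lemma inner_gradient {φ : Ed d → ℝ} (x w : Ed d) :
    (inner ℝ (gradient φ x) w : ℝ) = fderiv ℝ φ x w := by
  rw [gradient]
  rw [← InnerProductSpace.toDual_apply_apply]
  simp

end Aux

/-- If `μ` is a closed measure along which the Fenchel equality
`L(x,v) + H(x,Du(x)) = ⟨Du(x),v⟩` holds a.e., then the projection of `μ`
solves the continuity equation `div(m ∂H/∂p(x,Du)) = 0` in the sense of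
distributions: `∫ ⟨Dφ(x), ∂H/∂p(x,Du(x))⟩ dμ = 0` for all periodic `C¹` φ. -/


theorem stmt18 (d : ℕ) (hd : 1 ≤ d)
    (H : Ed d → Ed d → ℝ) (hHper : ZPeriodic1 H)
    (hHconv : ∀ x : Ed d, ConvexOn ℝ Set.univ (H x))
    (hHdiff : ∀ x : Ed d, Differentiable ℝ (H x))
    (L : Ed d → Ed d → ℝ)
    (hL : ∀ x v : Ed d, IsLUB (Set.range fun p : Ed d => rinner p v - H x p) (L x v))
    (u : Ed d → ℝ) (huper : ZPeriodic u)
    (μ : Measure (Td d × Ed d)) (hμ : IsProbabilityMeasure μ)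
    (hclosed : ClosedMeasure μ)
    (hae : ∀ᵐ p ∂μ, ∀ x : Ed d, projT x = p.1 →
      DifferentiableAt ℝ u x ∧
        L x p.2 + H x (gradient u x) = rinner (gradient u x) p.2) :
    ∀ φ : Ed d → ℝ, ContDiff ℝ 1 φ → ZPeriodic φ →
      ∀ W : Td d × Ed d → ℝ,
        (∀ (x v : Ed d), DifferentiableAt ℝ u x →
          W (projT x, v) = rinner (gradient φ x) (gradient (H x) (gradient u x))) →
        ∫ p, W p ∂μ = 0 := by
  intro φ hφ hφper W hW
  classical
  set sec : Td d → Ed d := Function.surjInv projT_surjective with hsec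
  have hsecp : ∀ t, projT (sec t) = t := fun t => Function.surjInv_eq projT_surjective t
  set G : Td d → (Ed d →L[ℝ] ℝ) := fun t => fderiv ℝ φ (sec t) with hG
  have hGx : ∀ x : Ed d, G (projT x) = fderiv ℝ φ x :=
    fun x => fderiv_periodic hφ hφper (hsecp (projT x))
  have hae2 : ∀ᵐ p ∂μ, W p = G p.1 p.2 := by
    filter_upwards [hae] with p hp
    obtain ⟨x, hx⟩ := projT_surjective p.1
    obtain ⟨hdiff, hfen⟩ := hp x hx
    set q := gradient u x with hq
    set v := p.2 with hv
    have hub : ∀ r : Ed d, rinner r v - H x r ≤ L x v := fun r => (hL x v).1 ⟨r, rfl⟩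
    have hLv : L x v = rinner q v - H x q := by linarith [hfen]
    have hmin : IsLocalMin (fun r => H x r - rinner r v) q := by
      apply IsMinOn.isLocalMin (s := Set.univ) ?_ Filter.univ_mem
      intro r _
      have h1 := hub r
      simp only [hLv] at h1
      simp only [Set.mem_setOf_eq]
      linarith
    have h1 : (fun r : Ed d => rinner r v) = fun r => (innerSL ℝ v) r := by
      funext r; simp only [rinner, innerSL_apply_apply]; exact (real_inner_comm r v).symm
    have hden : fderiv ℝ (fun r => H x r - rinner r v) q =
        fderiv ℝ (H x) q - (innerSL ℝ v) := by
      rw [show (fun r => H x r - rinner r v) = (fun r => H x r - (innerSL ℝ v) r) from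
        funext fun r => by rw [congrFun h1 r]]
      rw [fderiv_fun_sub ((hHdiff x) q) ((innerSL ℝ v).differentiableAt)]
      congr 1
      exact (innerSL ℝ v).fderiv
    have h0 := hmin.fderiv_eq_zero
    rw [hden] at h0
    have hfd : fderiv ℝ (H x) q = innerSL ℝ v := sub_eq_zero.mp h0
    have hgrad : gradient (H x) q = v := by
      have hdv : (InnerProductSpace.toDual ℝ (Ed d)) v = innerSL ℝ v := by
        ext w; simp [InnerProductSpace.toDual_apply_apply]
      rw [gradient, hfd, ← hdv, LinearIsometryEquiv.symm_apply_apply]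
    have hWp : W p = W (projT x, p.2) := by rw [hx]
    rw [hWp, hW x p.2 hdiff, ← hq, hgrad, ← hx, hGx x, rinner]
    exact inner_gradient x v
  rw [integral_congr_ae hae2]
  exact hclosed.2 φ hφ hφper G hGx
end
end
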